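/- arXiv:1612.05178 — 5 statements merged into one kernel-verified Lean document; each statement's English description precedes it below -/
import Mathlib

section
/- Let k ≥ 1, let β_1,…,β_k > 0 and set β = ∑_{i=1}^k β_i. Then there exists a constant C⁺ > 0 such that for every nonempty τ ⊂ {1,…,k} with τ^c ≠ ∅ and every z ∈ (0,∞)^k: ∫_{(0, z_{τ^c})} ‖(z_τ, u)‖₁^{−1−β} ∏_{i ∉ τ} u_i^{−1+β_i} du ≤ C⁺ ‖z_τ‖_∞^{−1−∑_{i∈τ} β_i}. -/
open MeasureTheory Real Set Filter

noncomputable section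

/-- The ℓ¹-norm on `ℝ^k`. -/
def l1 {k : ℕ} (v : Fin k → ℝ) : ℝ := ∑ i, |v i|

/-- The vector `(z_τ, u)` having components `z i` for `i ∈ τ` and `u i` for `i ∉ τ`. -/
def combine {k : ℕ} (τ : Finset (Fin k)) (z : Fin k → ℝ)
    (u : {i : Fin k // i ∉ τ} → ℝ) : Fin k → ℝ :=
  fun i => if h : i ∈ τ then z i else u ⟨i, h⟩

/-- upper bound of Lemma 1 of the paper.  For `β₁,…,β_k > 0` and
`β = ∑ βᵢ`, there is `C⁺ > 0` such that for every nonempty `τ ⊊ {1,…,k}` and `z ∈ (0,∞)^k`,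
`∫_{(0,z_{τᶜ})} ‖(z_τ,u)‖₁^{−1−β} ∏_{i∉τ} uᵢ^{−1+βᵢ} du ≤ C⁺ ‖z_τ‖_∞^{−1−∑_{i∈τ} βᵢ}`. -/

def Gfun (M p d : ℝ) : ℝ → ℝ := fun u =>
  if u ≤ 0 then 0 else if u ≤ M then M ^ (-p) * u ^ (p - 1) else M ^ d * u ^ (-1 - d)

lemma Gfun_nonneg (M p d u : ℝ) (hM : 0 ≤ M) : 0 ≤ Gfun M p d u := by
  unfold Gfun
  split_ifs with h1 h2
  · exact le_refl 0
  · exact mul_nonneg (rpow_nonneg hM _) (rpow_nonneg (le_of_lt (not_le.1 h1)) _)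
  · exact mul_nonneg (rpow_nonneg hM _) (rpow_nonneg (le_of_lt (not_le.1 h1)) _)

lemma Gfun_eq (M p d : ℝ) (hM : 0 < M) :
    Gfun M p d = (Set.Ioc 0 M).indicator (fun u => M ^ (-p) * u ^ (p - 1))
      + (Set.Ioi M).indicator (fun u => M ^ d * u ^ (-1 - d)) := by
  funext u
  simp only [Pi.add_apply, Gfun]
  rcases le_or_gt u 0 with h | h
  · rw [if_pos h, Set.indicator_of_notMem (by simp only [Set.mem_Ioc, not_and]; intro h'; linarith),
      Set.indicator_of_notMem (by simp only [Set.mem_Ioi, not_lt]; linarith), add_zero]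
  rw [if_neg (not_le.2 h)]
  rcases le_or_gt u M with h2 | h2
  · rw [if_pos h2, Set.indicator_of_mem (Set.mem_Ioc.2 ⟨h, h2⟩),
      Set.indicator_of_notMem (by simp only [Set.mem_Ioi, not_lt]; linarith), add_zero]
  · rw [if_neg (not_le.2 h2), Set.indicator_of_notMem (by simp only [Set.mem_Ioc, not_and, not_le]; intro; linarith),
      Set.indicator_of_mem (Set.mem_Ioi.2 h2), zero_add]

lemma Gfun_integrableOn1 {M p : ℝ} (hM : 0 < M) (hp : 0 < p) :
    IntegrableOn (fun u : ℝ => M ^ (-p) * u ^ (p - 1)) (Set.Ioc 0 M) := by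
  have := (intervalIntegral.intervalIntegrable_rpow' (a := 0) (b := M) (r := p - 1) (by linarith))
  rw [intervalIntegrable_iff_integrableOn_Ioc_of_le hM.le] at this
  exact this.const_mul _

lemma Gfun_integrableOn2 {M d : ℝ} (hM : 0 < M) (hd : 0 < d) :
    IntegrableOn (fun u : ℝ => M ^ d * u ^ (-1 - d)) (Set.Ioi M) :=
  (integrableOn_Ioi_rpow_of_lt (by linarith) hM).const_mul _

lemma Gfun_integrable {M p d : ℝ} (hM : 0 < M) (hp : 0 < p) (hd : 0 < d) :
    Integrable (Gfun M p d) := by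
  rw [Gfun_eq M p d hM]
  exact ((integrable_indicator_iff measurableSet_Ioc).2 (Gfun_integrableOn1 hM hp)).add
    ((integrable_indicator_iff measurableSet_Ioi).2 (Gfun_integrableOn2 hM hd))

lemma Gfun_integral {M p d : ℝ} (hM : 0 < M) (hp : 0 < p) (hd : 0 < d) :
    ∫ u, Gfun M p d u = p⁻¹ + d⁻¹ := by
  have h1 := (integrable_indicator_iff (μ := volume) measurableSet_Ioc).2 (Gfun_integrableOn1 hM hp)
  have h2 := (integrable_indicator_iff (μ := volume) measurableSet_Ioi).2 (Gfun_integrableOn2 hM hd)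
  have key : ∫ u, Gfun M p d u
      = (∫ u, (Set.Ioc 0 M).indicator (fun u => M ^ (-p) * u ^ (p - 1)) u)
        + ∫ u, (Set.Ioi M).indicator (fun u => M ^ d * u ^ (-1 - d)) u := by
    rw [Gfun_eq M p d hM]
    exact integral_add h1 h2
  rw [key, integral_indicator measurableSet_Ioc, integral_indicator measurableSet_Ioi]
  have e1 : ∫ u in Set.Ioc 0 M, M ^ (-p) * u ^ (p - 1) = M ^ (-p) * (M ^ p / p) := by
    rw [integral_const_mul]
    congr 1
    rw [← intervalIntegral.integral_of_le hM.le]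
    open intervalIntegral in rw [integral_rpow (Or.inl (by linarith))]
    rw [Real.zero_rpow (by linarith : p - 1 + 1 ≠ 0)]
    rw [show p - 1 + 1 = p by ring]
    ring
  have e2 : ∫ u in Set.Ioi M, M ^ d * u ^ (-1 - d) = M ^ d * (M ^ (-d) / d) := by
    rw [integral_const_mul, integral_Ioi_rpow_of_lt (by linarith) hM]
    rw [show -1 - d + 1 = -d by ring]
    congr 1
    field_simp
  rw [e1, e2, show M ^ (-p) * (M ^ p / p) = M ^ (-p) * M ^ p / p by ring,
    show M ^ d * (M ^ (-d) / d) = M ^ d * M ^ (-d) / d by ring,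
    ← Real.rpow_add hM, ← Real.rpow_add hM,
    show -p + p = (0:ℝ) by ring, show d + -d = (0:ℝ) by ring, Real.rpow_zero]
  rw [one_div, one_div]

/-- upper bound of Lemma 1 of the paper. -/
theorem stmt3 {k : ℕ} (hk : 1 ≤ k) (β : Fin k → ℝ) (hβ : ∀ i, 0 < β i) :
    ∃ C : ℝ, 0 < C ∧
      ∀ τ : Finset (Fin k), ∀ hτ : τ.Nonempty, τᶜ.Nonempty →
        ∀ z : Fin k → ℝ, (∀ i, 0 < z i) →
          (∫ u in {u : {i : Fin k // i ∉ τ} → ℝ | ∀ j, 0 < u j ∧ u j < z j.1},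
              (l1 (combine τ z u)) ^ (-1 - ∑ i, β i)
                * ∏ j : {i : Fin k // i ∉ τ}, (u j) ^ (-1 + β j.1))
            ≤ C * (τ.sup' hτ z) ^ (-1 - ∑ i ∈ τ, β i) := by
  classical
  have hk' : (0:ℝ) < k := by exact_mod_cast hk
  set d : ℝ := (k:ℝ)⁻¹ with hd_def
  have hd : 0 < d := inv_pos.2 hk'
  have hCpos : 0 < ∏ i, ((β i)⁻¹ + (k:ℝ)) :=
    Finset.prod_pos fun i _ => by have := hβ i; positivity
  refine ⟨∏ i, ((β i)⁻¹ + (k:ℝ)), hCpos, ?_⟩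
  intro τ hτ hτc z hz
  set b := ∑ i, β i with hb_def
  set s := ∑ i ∈ τ, β i with hs_def
  set M := τ.sup' hτ z with hM_def
  obtain ⟨i0, hi0τ, hi0⟩ := Finset.exists_mem_eq_sup' hτ z
  have hM : 0 < M := by rw [hM_def, hi0]; exact hz i0
  have hs_pos : 0 < s := Finset.sum_pos (fun i _ => hβ i) hτ
  have hRpos : 0 < (∏ i, ((β i)⁻¹ + (k:ℝ))) * M ^ (-1 - s) :=
    mul_pos hCpos (Real.rpow_pos_of_pos hM _)
  -- sums over the subtype
  have hsum_c : ∑ j : {i : Fin k // i ∉ τ}, β j.1 = b - s := by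
    rw [← Finset.sum_subtype τᶜ (fun x => Finset.mem_compl) β]
    have := Finset.sum_compl_add_sum τ β
    rw [hb_def, hs_def]; linarith
  have hcard : (Fintype.card {i : Fin k // i ∉ τ} : ℝ) * d ≤ 1 := by
    have h1 : Fintype.card {i : Fin k // i ∉ τ} ≤ k := by
      simpa using Fintype.card_subtype_le (fun i : Fin k => i ∉ τ)
    calc (Fintype.card {i : Fin k // i ∉ τ} : ℝ) * d ≤ (k:ℝ) * d := by
          apply mul_le_mul_of_nonneg_right _ hd.le
          exact_mod_cast h1
      _ = 1 := by rw [hd_def]; field_simp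
  -- the key pointwise bound
  have key : ∀ u ∈ {u : {i : Fin k // i ∉ τ} → ℝ | ∀ j, 0 < u j ∧ u j < z j.1},
      (l1 (combine τ z u)) ^ (-1 - b) * ∏ j : {i : Fin k // i ∉ τ}, (u j) ^ (-1 + β j.1)
        ≤ M ^ (-1 - s) * ∏ j : {i : Fin k // i ∉ τ}, Gfun M (β j.1) d (u j) := by
    intro u hu
    have hu' : ∀ j, 0 < u j := fun j => (hu j).1
    set L := l1 (combine τ z u) with hL_def
    have hML : M ≤ L := by
      rw [hL_def, hM_def, hi0]
      calc z i0 = |combine τ z u i0| := by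
            rw [combine, dif_pos hi0τ, abs_of_pos (hz i0)]
        _ ≤ ∑ i, |combine τ z u i| :=
            Finset.single_le_sum (f := fun i => |combine τ z u i|)
              (fun i _ => abs_nonneg _) (Finset.mem_univ i0)
    have hLpos : 0 < L := hM.trans_le hML
    have huL : ∀ j : {i : Fin k // i ∉ τ}, u j ≤ L := by
      intro j
      calc u j = |combine τ z u j.1| := by
            rw [combine, dif_neg j.2, abs_of_pos (hu' j)]
        _ ≤ ∑ i, |combine τ z u i| :=
            Finset.single_le_sum (f := fun i => |combine τ z u i|)
              (fun i _ => abs_nonneg _) (Finset.mem_univ j.1)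
    set r : {i : Fin k // i ∉ τ} → ℝ := fun j => if u j ≤ M then 0 else β j.1 + d with hr_def
    have hr_nonneg : ∀ j, 0 ≤ r j := by
      intro j; rw [hr_def]; dsimp only; split_ifs
      · exact le_refl 0
      · have := hβ j.1; positivity
    have hr_le : ∀ j, r j ≤ β j.1 + d := by
      intro j; rw [hr_def]; dsimp only; split_ifs
      · have := hβ j.1; positivity
      · exact le_refl _
    have hsum_r : ∑ j, r j ≤ b - s + 1 := by
      calc ∑ j, r j ≤ ∑ j : {i : Fin k // i ∉ τ}, (β j.1 + d) :=
            Finset.sum_le_sum (fun j _ => hr_le j)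
        _ = (b - s) + (Fintype.card {i : Fin k // i ∉ τ} : ℝ) * d := by
            rw [Finset.sum_add_distrib, hsum_c, Finset.sum_const, nsmul_eq_mul,
              Finset.card_univ]
        _ ≤ b - s + 1 := by linarith
    set a : ℝ := 1 + b - ∑ j, r j with ha_def
    have ha : 0 ≤ a := by rw [ha_def]; linarith
    have hupos : ∀ j, (0:ℝ) ≤ u j := fun j => (hu' j).le
    have main : M ^ a * ∏ j, (u j) ^ r j ≤ L ^ (1 + b) := by
      have h1 : M ^ a ≤ L ^ a := Real.rpow_le_rpow hM.le hML ha
      have h2 : ∏ j, (u j) ^ r j ≤ ∏ j, L ^ r j :=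
        Finset.prod_le_prod (fun j _ => Real.rpow_nonneg (hupos j) _)
          (fun j _ => Real.rpow_le_rpow (hupos j) (huL j) (hr_nonneg j))
      calc M ^ a * ∏ j, (u j) ^ r j ≤ L ^ a * ∏ j, L ^ r j :=
            mul_le_mul h1 h2 (Finset.prod_nonneg fun j _ => Real.rpow_nonneg (hupos j) _)
              (Real.rpow_nonneg hLpos.le _)
        _ = L ^ (1 + b) := by
            rw [← Real.rpow_sum_of_pos hLpos, ← Real.rpow_add hLpos]
            congr 1
            rw [ha_def]; ring
    -- rewrite Gfun values
    have hG : ∀ j : {i : Fin k // i ∉ τ}, Gfun M (β j.1) d (u j)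
        = M ^ (r j - β j.1) * (u j) ^ (-1 + β j.1 - r j) := by
      intro j
      rw [hr_def]; dsimp only
      simp only [Gfun]
      rw [if_neg (not_le.2 (hu' j))]
      split_ifs with h
      · rw [show (0:ℝ) - β j.1 = -β j.1 by ring, show -1 + β j.1 - 0 = β j.1 - 1 by ring]
      · rw [show β j.1 + d - β j.1 = d by ring, show -1 + β j.1 - (β j.1 + d) = -1 - d by ring]
    have hRHS : M ^ (-1 - s) * ∏ j : {i : Fin k // i ∉ τ}, Gfun M (β j.1) d (u j)
        = M ^ (-a) * ∏ j, (u j) ^ (-1 + β j.1 - r j) := by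
      simp_rw [hG]
      rw [Finset.prod_mul_distrib, ← Real.rpow_sum_of_pos hM, ← mul_assoc,
        ← Real.rpow_add hM]
      congr 2
      rw [Finset.sum_sub_distrib, hsum_c, ha_def]
      ring
    rw [hRHS]
    have hLb : L ^ (-1 - b) ≤ M ^ (-a) * ∏ j, (u j) ^ (-r j) := by
      have hpos : 0 < M ^ a * ∏ j, (u j) ^ r j :=
        mul_pos (Real.rpow_pos_of_pos hM _)
          (Finset.prod_pos fun j _ => Real.rpow_pos_of_pos (hu' j) _)
      have hinv : (L ^ (1 + b))⁻¹ ≤ (M ^ a * ∏ j, (u j) ^ r j)⁻¹ :=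
        inv_anti₀ hpos main
      calc L ^ (-1 - b) = (L ^ (1 + b))⁻¹ := by
            rw [← Real.rpow_neg hLpos.le]; congr 1; ring
        _ ≤ (M ^ a * ∏ j, (u j) ^ r j)⁻¹ := hinv
        _ = M ^ (-a) * ∏ j, (u j) ^ (-r j) := by
            rw [mul_inv, ← Real.rpow_neg hM.le, ← Finset.prod_inv_distrib]
            congr 1
            exact Finset.prod_congr rfl fun j _ => by rw [← Real.rpow_neg (hupos j)]
    calc L ^ (-1 - b) * ∏ j : {i : Fin k // i ∉ τ}, (u j) ^ (-1 + β j.1)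
        ≤ (M ^ (-a) * ∏ j, (u j) ^ (-r j)) * ∏ j : {i : Fin k // i ∉ τ}, (u j) ^ (-1 + β j.1) :=
          mul_le_mul_of_nonneg_right hLb
            (Finset.prod_nonneg fun j _ => Real.rpow_nonneg (hupos j) _)
      _ = M ^ (-a) * ∏ j, (u j) ^ (-1 + β j.1 - r j) := by
          rw [mul_assoc, ← Finset.prod_mul_distrib]
          congr 1
          refine Finset.prod_congr rfl fun j _ => ?_
          rw [← Real.rpow_add (hu' j)]
          congr 1; ring
  -- measurability of the domain
  have hDmeas : MeasurableSet {u : {i : Fin k // i ∉ τ} → ℝ | ∀ j, 0 < u j ∧ u j < z j.1} := by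
    have : {u : {i : Fin k // i ∉ τ} → ℝ | ∀ j, 0 < u j ∧ u j < z j.1}
        = ⋂ j, (fun u : {i : Fin k // i ∉ τ} → ℝ => u j) ⁻¹' (Set.Ioo 0 (z j.1)) := by
      ext u; simp [Set.mem_iInter, Set.mem_Ioo]
    rw [this]
    exact MeasurableSet.iInter fun j => (measurable_pi_apply j) measurableSet_Ioo
  have hHint : Integrable (fun u : {i : Fin k // i ∉ τ} → ℝ =>
      ∏ j, Gfun M (β j.1) d (u j)) :=
    Integrable.fintype_prod (f := fun j : {i : Fin k // i ∉ τ} => Gfun M (β j.1) d)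
      (fun j => Gfun_integrable hM (hβ j.1) hd)
  have hHnn : ∀ u : {i : Fin k // i ∉ τ} → ℝ,
      0 ≤ ∏ j, Gfun M (β j.1) d (u j) :=
    fun u => Finset.prod_nonneg fun j _ => Gfun_nonneg _ _ _ _ hM.le
  by_cases hint : IntegrableOn (fun u : {i : Fin k // i ∉ τ} → ℝ =>
      (l1 (combine τ z u)) ^ (-1 - b) * ∏ j : {i : Fin k // i ∉ τ}, (u j) ^ (-1 + β j.1))
      {u : {i : Fin k // i ∉ τ} → ℝ | ∀ j, 0 < u j ∧ u j < z j.1}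
  · calc (∫ u in {u : {i : Fin k // i ∉ τ} → ℝ | ∀ j, 0 < u j ∧ u j < z j.1},
          (l1 (combine τ z u)) ^ (-1 - b) * ∏ j : {i : Fin k // i ∉ τ}, (u j) ^ (-1 + β j.1))
        ≤ ∫ u in {u : {i : Fin k // i ∉ τ} → ℝ | ∀ j, 0 < u j ∧ u j < z j.1},
            M ^ (-1 - s) * ∏ j, Gfun M (β j.1) d (u j) :=
          setIntegral_mono_on hint ((hHint.const_mul _).integrableOn) hDmeas key
      _ ≤ ∫ u : {i : Fin k // i ∉ τ} → ℝ, M ^ (-1 - s) * ∏ j, Gfun M (β j.1) d (u j) :=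
          setIntegral_le_integral (hHint.const_mul _)
            (Filter.Eventually.of_forall fun u =>
              mul_nonneg (Real.rpow_nonneg hM.le _) (hHnn u))
      _ = M ^ (-1 - s) * ∏ j : {i : Fin k // i ∉ τ}, ∫ x : ℝ, Gfun M (β j.1) d x := by
          rw [integral_const_mul, integral_fintype_prod_volume_eq_prod]
      _ = M ^ (-1 - s) * ∏ j : {i : Fin k // i ∉ τ}, ((β j.1)⁻¹ + (k:ℝ)) := by
          congr 1
          exact Finset.prod_congr rfl fun j _ => by
            rw [Gfun_integral hM (hβ j.1) hd, hd_def, inv_inv]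
      _ ≤ (∏ i, ((β i)⁻¹ + (k:ℝ))) * M ^ (-1 - s) := by
          rw [mul_comm]
          apply mul_le_mul_of_nonneg_right _ (Real.rpow_nonneg hM.le _)
          have h1 : ∏ j : {i : Fin k // i ∉ τ}, ((β j.1)⁻¹ + (k:ℝ))
              = ∏ i ∈ τᶜ, ((β i)⁻¹ + (k:ℝ)) :=
            (Finset.prod_subtype τᶜ (fun x => Finset.mem_compl) (fun i => (β i)⁻¹ + (k:ℝ))).symm
          rw [h1, ← Finset.prod_mul_prod_compl τᶜ (fun i => (β i)⁻¹ + (k:ℝ))]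
          apply le_mul_of_one_le_right
            (Finset.prod_nonneg fun i _ => by have := hβ i; positivity)
          calc (1:ℝ) = ∏ _i ∈ τᶜᶜ, (1:ℝ) := by rw [Finset.prod_const_one]
            _ ≤ ∏ i ∈ τᶜᶜ, ((β i)⁻¹ + (k:ℝ)) :=
              Finset.prod_le_prod (fun i _ => zero_le_one) (fun i _ => by
                have h := hβ i
                have h2 : 0 < (β i)⁻¹ := by positivity
                have h3 : (1:ℝ) ≤ k := by exact_mod_cast hk
                linarith)
  · rw [MeasureTheory.integral_undef hint]
    exact hRpos.le

end
end

section
/- Let k ≥ 1, let β_1,…,β_k > 0 and set β = ∑_{i=1}^k β_i. Then there exists a constant C⁻ > 0 such that for every nonempty τ ⊂ {1,…,k} with τ^c ≠ ∅ and every z ∈ (0,∞)^k: ∫_{(0, z_{τ^c})} ‖(z_τ, u)‖₁^{−1−β} ∏_{i ∉ τ} u_i^{−1+β_i} du ≥ C⁻ ‖z_τ‖_∞^{−1−∑_{i∈τ} β_i} ∏_{i ∉ τ} ( min(z_i/‖z_τ‖_∞, 1) )^{β_i}. -/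
open MeasureTheory Real Set Filter

noncomputable section

lemma rpow_int_Ioo {b c : ℝ} (hb : 0 < b) (hc : 0 < c) :
    IntegrableOn (fun t : ℝ => t ^ (-1 + b)) (Ioo 0 c) ∧
      ∫ t in Ioo (0:ℝ) c, t ^ (-1 + b) = c ^ b / b := by
  have h1 : IntervalIntegrable (fun t : ℝ => t ^ (-1 + b)) volume 0 c :=
    intervalIntegral.intervalIntegrable_rpow' (by linarith)
  have h2 : IntegrableOn (fun t : ℝ => t ^ (-1 + b)) (Ioc 0 c) volume :=
    (intervalIntegrable_iff_integrableOn_Ioc_of_le hc.le).mp h1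
  refine ⟨h2.mono_set Ioo_subset_Ioc_self, ?_⟩
  rw [← integral_Ioc_eq_integral_Ioo, ← intervalIntegral.integral_of_le hc.le,
    integral_rpow (Or.inl (by linarith))]
  have hb1 : -1 + b + 1 = b := by ring
  rw [hb1, Real.zero_rpow (by linarith : b ≠ 0)]
  ring

lemma indicator_pi_prod {ι : Type*} [Fintype ι] (s : ι → Set ℝ) (g : ι → ℝ → ℝ) (u : ι → ℝ) :
    (Set.univ.pi s).indicator (fun v => ∏ j, g j (v j)) u = ∏ j, (s j).indicator (g j) (u j) := by
  by_cases h : u ∈ Set.univ.pi s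
  · rw [Set.indicator_of_mem h]
    exact Finset.prod_congr rfl fun j _ => (Set.indicator_of_mem (h j (Set.mem_univ j)) _).symm
  · rw [Set.indicator_of_notMem h]
    have : ∃ j, u j ∉ s j := by simpa [Set.mem_pi] using h
    obtain ⟨j, hj⟩ := this
    exact (Finset.prod_eq_zero (Finset.mem_univ j) (Set.indicator_of_notMem hj _)).symm

lemma box_prod_integral {ι : Type*} [Fintype ι] (b c : ι → ℝ)
    (hb : ∀ j, 0 < b j) (hc : ∀ j, 0 < c j) :
    IntegrableOn (fun u : ι → ℝ => ∏ j, (u j) ^ (-1 + b j)) (Set.univ.pi fun j => Ioo 0 (c j)) ∧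
    ∫ u in Set.univ.pi (fun j => Ioo (0:ℝ) (c j)), ∏ j, (u j) ^ (-1 + b j)
      = ∏ j, (c j) ^ (b j) / (b j) := by
  have hmeasS : MeasurableSet (Set.univ.pi fun j => Ioo (0:ℝ) (c j)) :=
    MeasurableSet.univ_pi fun j => measurableSet_Ioo
  have heq : (Set.univ.pi fun j => Ioo (0:ℝ) (c j)).indicator (fun v => ∏ j, (v j) ^ (-1 + b j))
      = fun u => ∏ j, (Ioo (0:ℝ) (c j)).indicator (fun t => t ^ (-1 + b j)) (u j) :=
    funext (indicator_pi_prod (fun j => Ioo (0:ℝ) (c j)) (fun j t => t ^ (-1 + b j)))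
  have hFint : ∀ j, Integrable ((Ioo (0:ℝ) (c j)).indicator (fun t => t ^ (-1 + b j))) := by
    intro j
    rw [integrable_indicator_iff measurableSet_Ioo]
    exact (rpow_int_Ioo (hb j) (hc j)).1
  have hprod : Integrable fun u : ι → ℝ =>
      ∏ j, (Ioo (0:ℝ) (c j)).indicator (fun t => t ^ (-1 + b j)) (u j) :=
    Integrable.fintype_prod fun j => hFint j
  constructor
  · rw [← integrable_indicator_iff hmeasS, heq]; exact hprod
  · rw [← integral_indicator hmeasS, heq]
    beta_reduce
    rw [MeasureTheory.volume_pi,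
      MeasureTheory.integral_fintype_prod_eq_prod
        (fun j => (Ioo (0:ℝ) (c j)).indicator (fun t => t ^ (-1 + b j)))]
    exact Finset.prod_congr rfl fun j _ => by
      rw [integral_indicator measurableSet_Ioo]; exact (rpow_int_Ioo (hb j) (hc j)).2


/-- lower bound of Lemma 1 of the paper.  For `β₁,…,β_k > 0` and
`β = ∑ βᵢ`, there is `C⁻ > 0` such that for every nonempty `τ ⊊ {1,…,k}` and `z ∈ (0,∞)^k`,
`∫_{(0,z_{τᶜ})} ‖(z_τ,u)‖₁^{−1−β} ∏_{i∉τ} uᵢ^{−1+βᵢ} du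
  ≥ C⁻ ‖z_τ‖_∞^{−1−∑_{i∈τ} βᵢ} ∏_{i∉τ} (min(zᵢ/‖z_τ‖_∞, 1))^{βᵢ}`. -/
theorem stmt4 {k : ℕ} (hk : 1 ≤ k) (β : Fin k → ℝ) (hβ : ∀ i, 0 < β i) :
    ∃ C : ℝ, 0 < C ∧
      ∀ τ : Finset (Fin k), ∀ hτ : τ.Nonempty, τᶜ.Nonempty →
        ∀ z : Fin k → ℝ, (∀ i, 0 < z i) →
          C * (τ.sup' hτ z) ^ (-1 - ∑ i ∈ τ, β i)
              * ∏ j : {i : Fin k // i ∉ τ}, (min (z j.1 / τ.sup' hτ z) 1) ^ (β j.1)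
            ≤ ∫ u in {u : {i : Fin k // i ∉ τ} → ℝ | ∀ j, 0 < u j ∧ u j < z j.1},
                (l1 (combine τ z u)) ^ (-1 - ∑ i, β i)
                  * ∏ j : {i : Fin k // i ∉ τ}, (u j) ^ (-1 + β j.1) := by
  classical
  have hk0 : (0:ℝ) < (k:ℝ) := by exact_mod_cast Nat.lt_of_lt_of_le Nat.zero_lt_one hk
  set A : ℝ := ∑ i, β i with hA
  have hA0 : 0 ≤ A := Finset.sum_nonneg fun i _ => (hβ i).le
  have hepos : -1 - A ≤ 0 := by linarith
  refine ⟨(k:ℝ) ^ (-1 - A) * ∏ i, min (β i)⁻¹ 1, ?_, ?_⟩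
  · exact mul_pos (Real.rpow_pos_of_pos hk0 _)
      (Finset.prod_pos fun i _ => lt_min (inv_pos.mpr (hβ i)) one_pos)
  intro τ hτ hτc z hz
  set M := τ.sup' hτ z with hMdef
  obtain ⟨i₀, hi₀, hMi₀⟩ := τ.exists_mem_eq_sup' hτ z
  have hM : 0 < M := by rw [hMdef, hMi₀]; exact hz i₀
  set m : {i : Fin k // i ∉ τ} → ℝ := fun j => min (z j.1) M with hmdef
  have hm : ∀ j, 0 < m j := fun j => lt_min (hz j.1) hM
  set S : Set ({i : Fin k // i ∉ τ} → ℝ) := Set.univ.pi (fun j => Ioo 0 (z j.1)) with hSdef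
  set S' : Set ({i : Fin k // i ∉ τ} → ℝ) := Set.univ.pi (fun j => Ioo 0 (m j)) with hS'def
  have hSeq : {u : {i : Fin k // i ∉ τ} → ℝ | ∀ j, 0 < u j ∧ u j < z j.1} = S := by
    ext u; simp [hSdef, Set.mem_pi]
  have hS : MeasurableSet S := MeasurableSet.univ_pi fun j => measurableSet_Ioo
  have hS' : MeasurableSet S' := MeasurableSet.univ_pi fun j => measurableSet_Ioo
  have hsub : S' ⊆ S := Set.pi_mono fun j _ => Ioo_subset_Ioo le_rfl (min_le_left _ _)
  set p : ({i : Fin k // i ∉ τ} → ℝ) → ℝ := fun u => ∏ j, (u j) ^ (-1 + β j.1) with hpdef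
  set f : ({i : Fin k // i ∉ τ} → ℝ) → ℝ :=
    fun u => l1 (combine τ z u) ^ (-1 - A) * p u with hfdef
  -- lower bound on l1
  have hl1_ge : ∀ u, M ≤ l1 (combine τ z u) := by
    intro u
    have h0 : combine τ z u i₀ = z i₀ := dif_pos hi₀
    calc M = |combine τ z u i₀| := by rw [h0, abs_of_pos (hz i₀)]; exact hMi₀
    _ ≤ ∑ i, |combine τ z u i| :=
        Finset.single_le_sum (f := fun i => |combine τ z u i|) (fun i _ => abs_nonneg _) (Finset.mem_univ i₀)
    _ = l1 (combine τ z u) := rfl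
  have hl1_pos : ∀ u, 0 < l1 (combine τ z u) := fun u => lt_of_lt_of_le hM (hl1_ge u)
  -- upper bound on l1 on S'
  have hl1_le : ∀ u ∈ S', l1 (combine τ z u) ≤ (k:ℝ) * M := by
    intro u hu
    have hb : ∀ i : Fin k, |combine τ z u i| ≤ M := by
      intro i
      by_cases h : i ∈ τ
      · rw [combine, dif_pos h, abs_of_pos (hz i)]; exact Finset.le_sup' z h
      · rw [combine, dif_neg h]
        have h2 := hu ⟨i, h⟩ (Set.mem_univ _)
        rw [abs_of_pos h2.1]
        exact le_trans h2.2.le (min_le_right _ _)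
    calc l1 (combine τ z u) ≤ ∑ _i : Fin k, M := Finset.sum_le_sum fun i _ => hb i
    _ = (k:ℝ) * M := by
        rw [Finset.sum_const, Finset.card_univ, Fintype.card_fin, nsmul_eq_mul]
  -- measurability
  have hmeas_l1 : Measurable fun u : {i : Fin k // i ∉ τ} → ℝ => l1 (combine τ z u) := by
    unfold l1 combine
    apply Finset.measurable_sum
    intro i _
    apply Measurable.abs
    by_cases h : i ∈ τ
    · simpa [h] using measurable_const
    · simpa [h] using (measurable_pi_apply (⟨i, h⟩ : {i : Fin k // i ∉ τ}) : Measurable fun u : {i : Fin k // i ∉ τ} → ℝ => u ⟨i, h⟩)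
  -- integrability of p on boxes
  obtain ⟨hpS, hpSval⟩ := box_prod_integral (fun j : {i : Fin k // i ∉ τ} => β j.1)
    (fun j => z j.1) (fun j => hβ j.1) (fun j => hz j.1)
  obtain ⟨hpS', hpS'val⟩ := box_prod_integral (fun j : {i : Fin k // i ∉ τ} => β j.1)
    m (fun j => hβ j.1) hm
  -- integrability of f on S
  have hfS : IntegrableOn f S := by
    apply Integrable.bdd_mul (c := M ^ (-1 - A)) hpS
      ((hmeas_l1.pow measurable_const).aestronglyMeasurable)
    refine ae_of_all _ fun u => ?_
    rw [Real.norm_eq_abs, abs_of_nonneg (Real.rpow_nonneg (hl1_pos u).le _)]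
    exact Real.rpow_le_rpow_of_nonpos hM (hl1_ge u) hepos
  have hp_nonneg : ∀ u ∈ S, 0 ≤ p u := by
    intro u hu
    exact Finset.prod_nonneg fun j _ => Real.rpow_nonneg (hu j (Set.mem_univ j)).1.le _
  have hf_nonneg : 0 ≤ᵐ[volume.restrict S] f := by
    rw [EventuallyLE, ae_restrict_iff' hS]
    exact ae_of_all _ fun u hu =>
      mul_nonneg (Real.rpow_nonneg (hl1_pos u).le _) (hp_nonneg u hu)
  -- chain of inequalities
  have step1 : ∫ u in S', f u ≤ ∫ u in S, f u :=
    setIntegral_mono_set hfS hf_nonneg (HasSubset.Subset.eventuallyLE hsub)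
  have step2 : ∫ u in S', ((k:ℝ) * M) ^ (-1 - A) * p u ≤ ∫ u in S', f u := by
    apply setIntegral_mono_on (hpS'.const_mul _) (hfS.mono_set hsub) hS'
    intro u hu
    have hple : ((k:ℝ) * M) ^ (-1 - A) ≤ l1 (combine τ z u) ^ (-1 - A) :=
      Real.rpow_le_rpow_of_nonpos (hl1_pos u) (hl1_le u hu) hepos
    exact mul_le_mul_of_nonneg_right hple (hp_nonneg u (hsub hu))
  have step3 : ∫ u in S', ((k:ℝ) * M) ^ (-1 - A) * p u
      = ((k:ℝ) * M) ^ (-1 - A) * ∏ j, (m j) ^ (β j.1) / (β j.1) := by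
    rw [integral_const_mul, hpS'val]
  -- sum/product conversions between the subtype and τᶜ
  have hsum_eq : (∑ j : {i : Fin k // i ∉ τ}, β j.1) = ∑ i ∈ τᶜ, β i := by
    rw [← Finset.sum_coe_sort τᶜ β]
    exact Fintype.sum_equiv ((Equiv.subtypeEquivRight fun i => (Finset.mem_compl).symm))
      _ _ fun j => rfl
  have hprod_eq : (∏ j : {i : Fin k // i ∉ τ}, (β j.1)⁻¹) = ∏ i ∈ τᶜ, (β i)⁻¹ := by
    rw [← Finset.prod_coe_sort τᶜ fun i => (β i)⁻¹]
    exact Fintype.prod_equiv ((Equiv.subtypeEquivRight fun i => (Finset.mem_compl).symm))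
      _ _ fun j => rfl
  have hsplit : ∑ i ∈ τ, β i + ∑ i ∈ τᶜ, β i = A := by
    rw [hA]; exact Finset.sum_add_sum_compl τ β
  -- algebraic form of the right-hand side
  have hmj : ∀ j, m j = M * min (z j.1 / M) 1 := by
    intro j
    rw [hmdef]
    rw [mul_min_of_nonneg _ _ hM.le, mul_one, mul_comm M (z j.1 / M), div_mul_cancel₀ _ hM.ne']
  have hminnn : ∀ j : {i : Fin k // i ∉ τ}, (0:ℝ) ≤ min (z j.1 / M) 1 :=
    fun j => le_min (div_nonneg (hz j.1).le hM.le) zero_le_one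
  have hRHS : ((k:ℝ) * M) ^ (-1 - A) * ∏ j, (m j) ^ (β j.1) / (β j.1)
      = ((k:ℝ) ^ (-1 - A) * ∏ j : {i : Fin k // i ∉ τ}, (β j.1)⁻¹)
        * (M ^ (-1 - ∑ i ∈ τ, β i) * ∏ j : {i : Fin k // i ∉ τ}, (min (z j.1 / M) 1) ^ (β j.1)) := by
    have h1 : ∀ j : {i : Fin k // i ∉ τ}, (m j) ^ (β j.1) / (β j.1)
        = M ^ (β j.1) * ((min (z j.1 / M) 1) ^ (β j.1) * (β j.1)⁻¹) := by
      intro j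
      rw [hmj j, Real.mul_rpow hM.le (hminnn j)]
      ring
    rw [Finset.prod_congr rfl fun j _ => h1 j, Finset.prod_mul_distrib, Finset.prod_mul_distrib,
      ← Real.rpow_sum_of_pos hM, Real.mul_rpow hk0.le hM.le]
    have h2 : M ^ (-1 - A) * M ^ (∑ j : {i : Fin k // i ∉ τ}, β j.1)
        = M ^ (-1 - ∑ i ∈ τ, β i) := by
      rw [← Real.rpow_add hM]
      congr 1
      rw [hsum_eq]; linarith
    rw [← h2]; ring
  -- prod of mins inequality
  have hprodle : (∏ i, min (β i)⁻¹ 1) ≤ ∏ j : {i : Fin k // i ∉ τ}, (β j.1)⁻¹ := by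
    rw [hprod_eq, ← Finset.prod_mul_prod_compl τ fun i => min (β i)⁻¹ 1]
    have h1 : (∏ i ∈ τ, min (β i)⁻¹ 1) ≤ 1 :=
      Finset.prod_le_one (fun i _ => le_min (inv_nonneg.mpr (hβ _).le) zero_le_one)
        (fun i _ => min_le_right _ _)
    have h2 : (∏ i ∈ τᶜ, min (β i)⁻¹ 1) ≤ ∏ i ∈ τᶜ, (β i)⁻¹ :=
      Finset.prod_le_prod (fun i _ => le_min (inv_nonneg.mpr (hβ _).le) zero_le_one)
        (fun i _ => min_le_left _ _)
    calc (∏ i ∈ τ, min (β i)⁻¹ 1) * ∏ i ∈ τᶜ, min (β i)⁻¹ 1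
        ≤ 1 * ∏ i ∈ τᶜ, (β i)⁻¹ := by
          apply mul_le_mul h1 h2
            (Finset.prod_nonneg fun i _ => le_min (inv_nonneg.mpr (hβ _).le) zero_le_one) zero_le_one
      _ = ∏ i ∈ τᶜ, (β i)⁻¹ := one_mul _
  rw [hSeq]
  calc ((k:ℝ) ^ (-1 - A) * ∏ i, min (β i)⁻¹ 1) * M ^ (-1 - ∑ i ∈ τ, β i)
        * ∏ j : {i : Fin k // i ∉ τ}, (min (z j.1 / M) 1) ^ (β j.1)
      ≤ ((k:ℝ) * M) ^ (-1 - A) * ∏ j, (m j) ^ (β j.1) / (β j.1) := by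
        rw [hRHS, mul_assoc]
        apply mul_le_mul_of_nonneg_right
          (mul_le_mul_of_nonneg_left hprodle (Real.rpow_nonneg hk0.le _))
        exact mul_nonneg (Real.rpow_nonneg hM.le _)
          (Finset.prod_nonneg fun j _ => Real.rpow_nonneg (hminnn j) _)
    _ = ∫ u in S', ((k:ℝ) * M) ^ (-1 - A) * p u := step3.symm
    _ ≤ ∫ u in S', f u := step2
    _ ≤ ∫ u in S, f u := step1

end
end

section
/- Let k ≥ 2 and let h : int(S^{k−1}) → [0,∞) be measurable. Then for every r > 0 and every Borel set B ⊂ int(S^{k−1}): ∫_{{z ∈ (0,∞)^k : ‖z‖₁ > r, z/‖z‖₁ ∈ B}} k ‖z‖₁^{−k−1} h(z/‖z‖₁) dz = k r^{−1} ∫_B h(w) σ(dw), where dz is k-dimensional Lebesgue measure and σ is the (k−1)-dimensional Lebesgue measure on the simplex obtained as the image of Lebesgue measure on {(w_1,…,w_{k−1}) ∈ (0,1)^{k−1} : ∑_{i<k} w_i < 1} under (w_1,…,w_{k−1}) ↦ (w_1,…,w_{k−1}, 1 − ∑_{i<k} w_i). -/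
open MeasureTheory Real Set Filter

noncomputable section

/-- The interior of the unit simplex `S^{k−1}`. -/
def intSimplex (k : ℕ) : Set (Fin k → ℝ) := {w | (∀ i, 0 < w i) ∧ ∑ i, w i = 1}

/-- The parametrization `(w₁,…,w_{k−1}) ↦ (w₁,…,w_{k−1}, 1 − ∑_{i<k} wᵢ)` of the simplex. -/
def simplexParam (k : ℕ) (w : Fin (k - 1) → ℝ) : Fin k → ℝ :=
  fun i => if h : (i : ℕ) < k - 1 then w ⟨i.1, h⟩ else 1 - ∑ j, w j

/-- The `(k−1)`-dimensional Lebesgue measure `σ` on the (interior of the) simplex, i.e. the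
image under `simplexParam` of Lebesgue measure on
`{(w₁,…,w_{k−1}) ∈ (0,1)^{k−1} : ∑ wᵢ < 1}`. -/
noncomputable def simplexMeasure (k : ℕ) : Measure (Fin k → ℝ) :=
  Measure.map (simplexParam k)
    (volume.restrict {w : Fin (k - 1) → ℝ | (∀ j, 0 < w j) ∧ ∑ j, w j < 1})

namespace Stmt5Aux

variable {n : ℕ}

lemma sp_lt (w : Fin n → ℝ) {i : Fin (n+1)} (h : (i : ℕ) < n) :
    simplexParam (n+1) w i = w ⟨i.1, h⟩ := dif_pos h

lemma sp_castSucc (w : Fin n → ℝ) (j : Fin n) :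
    simplexParam (n+1) w j.castSucc = w j := by
  have h : ((j.castSucc : Fin (n+1)) : ℕ) < n := by simp
  have h2 : (⟨((j.castSucc : Fin (n+1)) : ℕ), h⟩ : Fin n) = j := Fin.ext (Fin.coe_castSucc j)
  rw [sp_lt w h, h2]

lemma sp_last (w : Fin n → ℝ) :
    simplexParam (n+1) w (Fin.last n) = 1 - ∑ j, w j := dif_neg (by simp)

lemma sp_sum (w : Fin n → ℝ) : ∑ i, simplexParam (n+1) w i = 1 := by
  rw [Fin.sum_univ_castSucc]
  simp [sp_castSucc, sp_last]

lemma sp_measurable : Measurable (simplexParam (n+1) : (Fin n → ℝ) → (Fin (n+1) → ℝ)) := by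
  apply measurable_pi_lambda
  intro i
  by_cases h : (i : ℕ) < n
  · simpa [simplexParam, dif_pos h] using measurable_pi_apply _
  · show Measurable fun w : Fin n → ℝ => simplexParam (n+1) w i
    have heq : (fun w : Fin n → ℝ => simplexParam (n+1) w i)
        = fun w => 1 - ∑ j, w j := by
      funext w; exact dif_neg h
    rw [heq]
    exact (Finset.measurable_sum Finset.univ fun j _ => measurable_pi_apply j).const_sub 1

/-- projection to the first `n` coordinates -/
def pC (n : ℕ) (x : Fin (n+1) → ℝ) : Fin n → ℝ := fun j => x j.castSucc

/-- polar map -/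
def Phi (n : ℕ) (x : Fin (n+1) → ℝ) : Fin (n+1) → ℝ :=
  fun i => x (Fin.last n) * simplexParam (n+1) (pC n x) i

def Ul (n : ℕ) (x : Fin (n+1) → ℝ) : (Fin (n+1) → ℝ) →L[ℝ] (Fin (n+1) → ℝ) :=
  ContinuousLinearMap.pi fun i =>
    if (i : ℕ) < n then
      x (Fin.last n) • ContinuousLinearMap.proj i + x i • ContinuousLinearMap.proj (Fin.last n)
    else ContinuousLinearMap.proj (Fin.last n)

def Ml (n : ℕ) : (Fin (n+1) → ℝ) →L[ℝ] (Fin (n+1) → ℝ) :=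
  ContinuousLinearMap.pi fun i =>
    if (i : ℕ) < n then ContinuousLinearMap.proj i
    else ContinuousLinearMap.proj (Fin.last n) - ∑ j : Fin n, ContinuousLinearMap.proj j.castSucc

def Phi' (n : ℕ) (x : Fin (n+1) → ℝ) : (Fin (n+1) → ℝ) →L[ℝ] (Fin (n+1) → ℝ) :=
  (Ml n).comp (Ul n x)

lemma Ul_apply_lt (x v : Fin (n+1) → ℝ) {i : Fin (n+1)} (h : (i : ℕ) < n) :
    Ul n x v i = x (Fin.last n) * v i + x i * v (Fin.last n) := by
  simp [Ul, if_pos h]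

lemma Ul_apply_last (x v : Fin (n+1) → ℝ) :
    Ul n x v (Fin.last n) = v (Fin.last n) := by
  simp [Ul]

lemma Ml_apply_lt (v : Fin (n+1) → ℝ) {i : Fin (n+1)} (h : (i : ℕ) < n) :
    Ml n v i = v i := by
  simp [Ml, if_pos h]

lemma Ml_apply_last (v : Fin (n+1) → ℝ) :
    Ml n v (Fin.last n) = v (Fin.last n) - ∑ j : Fin n, v j.castSucc := by
  simp [Ml]

lemma phi_hasFDerivAt (x : Fin (n+1) → ℝ) : HasFDerivAt (Phi n) (Phi' n x) x := by
  rw [hasFDerivAt_pi']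
  intro i
  by_cases hi : (i : ℕ) < n
  · have hfe : (fun y : Fin (n+1) → ℝ => Phi n y i) = fun y => y (Fin.last n) * y i := by
      funext y
      have h2 : ((⟨(i : ℕ), hi⟩ : Fin n).castSucc : Fin (n+1)) = i := Fin.ext rfl
      simp only [Phi, sp_lt _ hi, pC, h2]
    rw [hfe]
    have hd : HasFDerivAt (fun y : Fin (n+1) → ℝ => y (Fin.last n) * y i)
        (x (Fin.last n) • (ContinuousLinearMap.proj i : (Fin (n+1) → ℝ) →L[ℝ] ℝ)
          + x i • (ContinuousLinearMap.proj (Fin.last n) : (Fin (n+1) → ℝ) →L[ℝ] ℝ)) x :=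
      (ContinuousLinearMap.proj (Fin.last n) :
        (Fin (n+1) → ℝ) →L[ℝ] ℝ).hasFDerivAt.mul
        ((ContinuousLinearMap.proj i : (Fin (n+1) → ℝ) →L[ℝ] ℝ).hasFDerivAt)
    refine hd.congr_fderiv ?_
    refine ContinuousLinearMap.ext fun v => ?_
    simp [Phi', Ml_apply_lt _ hi, Ul_apply_lt _ _ hi]
  · have hil : i = Fin.last n := Fin.ext (by
      have := i.isLt
      simp only [Fin.val_last]
      omega)
    subst hil
    have hfe : (fun y : Fin (n+1) → ℝ => Phi n y (Fin.last n))
        = fun y => y (Fin.last n) * (1 - ∑ j : Fin n, y j.castSucc) := by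
      funext y
      simp only [Phi, sp_last, pC]
    rw [hfe]
    have hsum : HasFDerivAt (fun y : Fin (n+1) → ℝ => ∑ j : Fin n, y j.castSucc)
        (∑ j : Fin n, (ContinuousLinearMap.proj j.castSucc : (Fin (n+1) → ℝ) →L[ℝ] ℝ)) x :=
      HasFDerivAt.fun_sum fun j _ =>
        (ContinuousLinearMap.proj j.castSucc : (Fin (n+1) → ℝ) →L[ℝ] ℝ).hasFDerivAt
    have hone := hsum.const_sub 1
    have hd := (ContinuousLinearMap.proj (Fin.last n) :
        (Fin (n+1) → ℝ) →L[ℝ] ℝ).hasFDerivAt.mul hone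
    refine hd.congr_fderiv ?_
    refine ContinuousLinearMap.ext fun v => ?_
    have hUl : ∀ j : Fin n, Ul n x v j.castSucc
        = x (Fin.last n) * v j.castSucc + x j.castSucc * v (Fin.last n) :=
      fun j => Ul_apply_lt _ _ (by simp)
    simp only [Phi', ContinuousLinearMap.comp_apply, ContinuousLinearMap.proj_apply,
      Ml_apply_last, Ul_apply_last, hUl, ContinuousLinearMap.add_apply,
      ContinuousLinearMap.smul_apply, ContinuousLinearMap.neg_apply,
      ContinuousLinearMap.sum_apply, smul_eq_mul]
    rw [Finset.sum_add_distrib, ← Finset.mul_sum, ← Finset.sum_mul]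
    ring

lemma det_Ul (x : Fin (n+1) → ℝ) : (Ul n x).det = x (Fin.last n) ^ n := by
  rw [ContinuousLinearMap.det, ← LinearMap.det_toMatrix']
  set M := LinearMap.toMatrix' ((Ul n x : (Fin (n+1) → ℝ) →ₗ[ℝ] (Fin (n+1) → ℝ))) with hM
  have htri : M.BlockTriangular id := by
    intro i j hij
    have hij' : (j : ℕ) < (i : ℕ) := hij
    rw [hM, LinearMap.toMatrix'_apply, ContinuousLinearMap.coe_coe]
    by_cases hi : (i : ℕ) < n
    · rw [Ul_apply_lt _ _ hi]
      have h1 : i ≠ j := by intro hc; subst hc; omega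
      have h2 : Fin.last n ≠ j := by
        intro hc
        have : (j : ℕ) = n := by rw [← hc]; simp
        omega
      simp [Pi.single_apply, if_neg h1, if_neg h2]
    · have hil : i = Fin.last n := Fin.ext (by have := i.isLt; simp only [Fin.val_last]; omega)
      subst hil
      rw [Ul_apply_last]
      have h2 : Fin.last n ≠ j := by intro hc; subst hc; omega
      simp [Pi.single_apply, if_neg h2]
  rw [Matrix.det_of_upperTriangular htri]
  have hdiag : ∀ j : Fin n, M j.castSucc j.castSucc = x (Fin.last n) := by
    intro j
    rw [hM, LinearMap.toMatrix'_apply, ContinuousLinearMap.coe_coe,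
      Ul_apply_lt _ _ (by simp [j.isLt])]
    have h2 : Fin.last n ≠ j.castSucc := by
      intro hc
      have : (j : ℕ) = n := by
        have := congrArg (fun t : Fin (n+1) => (t : ℕ)) hc
        simpa using this.symm
      omega
    simp [if_neg h2]
  have hlast : M (Fin.last n) (Fin.last n) = 1 := by
    rw [hM, LinearMap.toMatrix'_apply, ContinuousLinearMap.coe_coe, Ul_apply_last]
    simp
  rw [Fin.prod_univ_castSucc]
  simp [hdiag, hlast]

lemma det_Ml : (Ml n).det = 1 := by
  rw [ContinuousLinearMap.det, ← LinearMap.det_toMatrix']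
  set M := LinearMap.toMatrix' ((Ml n : (Fin (n+1) → ℝ) →ₗ[ℝ] (Fin (n+1) → ℝ))) with hM
  have htri : M.BlockTriangular OrderDual.toDual := by
    intro i j hij
    have hij' : (i : ℕ) < (j : ℕ) := hij
    have hi : (i : ℕ) < n := by have := j.isLt; omega
    rw [hM, LinearMap.toMatrix'_apply, ContinuousLinearMap.coe_coe, Ml_apply_lt _ hi]
    have h1 : i ≠ j := by intro hc; subst hc; omega
    simp [Pi.single_apply, if_neg h1]
  rw [Matrix.det_of_lowerTriangular M htri]
  apply Finset.prod_eq_one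
  intro i _
  by_cases hi : (i : ℕ) < n
  · rw [hM, LinearMap.toMatrix'_apply, ContinuousLinearMap.coe_coe, Ml_apply_lt _ hi]
    simp
  · have hil : i = Fin.last n := Fin.ext (by have := i.isLt; simp only [Fin.val_last]; omega)
    subst hil
    rw [hM, LinearMap.toMatrix'_apply, ContinuousLinearMap.coe_coe, Ml_apply_last]
    have : ∀ j : Fin n, (fun j' => if j' = Fin.last n then (1:ℝ) else 0) j.castSucc = 0 := by
      intro j
      have h2 : j.castSucc ≠ Fin.last n := by
        intro hc
        have : (j : ℕ) = n := by
          have := congrArg (fun t : Fin (n+1) => (t : ℕ)) hc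
          simpa using this
        omega
      simp [if_neg h2]
    simp [this]

lemma det_Phi' (x : Fin (n+1) → ℝ) : (Phi' n x).det = x (Fin.last n) ^ n := by
  have : (Phi' n x).det = (Ml n).det * (Ul n x).det := by
    rw [Phi', ContinuousLinearMap.det, ContinuousLinearMap.toLinearMap_comp, LinearMap.det_comp]
  rw [this, det_Ml, det_Ul, one_mul]

lemma phi_apply_lt (x : Fin (n+1) → ℝ) {i : Fin (n+1)} (hi : (i : ℕ) < n) :
    Phi n x i = x (Fin.last n) * x i := by
  have h2 : ((⟨(i : ℕ), hi⟩ : Fin n).castSucc : Fin (n+1)) = i := Fin.ext rfl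
  simp only [Phi, sp_lt _ hi, pC, h2]

lemma phi_apply_last (x : Fin (n+1) → ℝ) :
    Phi n x (Fin.last n) = x (Fin.last n) * (1 - ∑ j : Fin n, x j.castSucc) := by
  simp only [Phi, sp_last, pC]

lemma phi_sum (x : Fin (n+1) → ℝ) : ∑ i, Phi n x i = x (Fin.last n) := by
  simp [Phi, ← Finset.mul_sum, sp_sum]

lemma sp_pos {w : Fin n → ℝ} (h1 : ∀ j, 0 < w j) (h2 : ∑ j, w j < 1) (i : Fin (n+1)) :
    0 < simplexParam (n+1) w i := by
  by_cases hi : (i : ℕ) < n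
  · rw [sp_lt _ hi]; exact h1 _
  · have hil : i = Fin.last n := Fin.ext (by have := i.isLt; simp only [Fin.val_last]; omega)
    subst hil
    rw [sp_last]
    linarith

lemma l1_eq_sum {k : ℕ} {z : Fin k → ℝ} (hz : ∀ i, 0 ≤ z i) : l1 z = ∑ i, z i := by
  unfold l1
  exact Finset.sum_congr rfl fun i _ => abs_of_nonneg (hz i)

lemma phi_inj {x₁ x₂ : Fin (n+1) → ℝ} (h1 : 0 < x₁ (Fin.last n))
    (hx : Phi n x₁ = Phi n x₂) : x₁ = x₂ := by
  have ht : x₁ (Fin.last n) = x₂ (Fin.last n) := by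
    have := congrArg (fun z : Fin (n+1) → ℝ => ∑ i, z i) hx
    simpa [phi_sum] using this
  funext i
  by_cases hi : (i : ℕ) < n
  · have hc := congrFun hx i
    rw [phi_apply_lt _ hi, phi_apply_lt _ hi, ← ht] at hc
    exact mul_left_cancel₀ (ne_of_gt h1) hc
  · have hil : i = Fin.last n := Fin.ext (by have := i.isLt; simp only [Fin.val_last]; omega)
    subst hil
    exact ht

end Stmt5Aux

open Stmt5Aux

/-- the polar decomposition \eqref{eq:H} with densities.  For measurable
`h : int(S^{k−1}) → [0,∞)`, every `r > 0` and every Borel `B ⊆ int(S^{k−1})`,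
`∫_{{z ∈ (0,∞)^k : ‖z‖₁ > r, z/‖z‖₁ ∈ B}} k ‖z‖₁^{−k−1} h(z/‖z‖₁) dz = k r⁻¹ ∫_B h dσ`. -/
theorem stmt5 {k : ℕ} (hk : 2 ≤ k) (h : (Fin k → ℝ) → ℝ)
    (hmeas : Measurable h) (hnonneg : ∀ w ∈ intSimplex k, 0 ≤ h w)
    (r : ℝ) (hr : 0 < r) (B : Set (Fin k → ℝ)) (hB : MeasurableSet B)
    (hBsub : B ⊆ intSimplex k) :
    ∫⁻ z in {z : Fin k → ℝ | (∀ i, 0 < z i) ∧ r < l1 z ∧ (fun i => z i / l1 z) ∈ B},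
        ENNReal.ofReal ((k : ℝ) * (l1 z) ^ (-(k : ℝ) - 1) * h (fun i => z i / l1 z))
      = ENNReal.ofReal ((k : ℝ) * r⁻¹) * ∫⁻ w in B, ENNReal.ofReal (h w) ∂(simplexMeasure k) := by
  obtain ⟨m, rfl⟩ : ∃ m, k = m + 1 := ⟨k - 1, by omega⟩
  -- measurability of the simplex-coordinate domain
  have hS : MeasurableSet {w : Fin m → ℝ | (∀ j, 0 < w j) ∧ ∑ j, w j < 1} := by
    have h1 : {w : Fin m → ℝ | ∀ j, 0 < w j} = ⋂ j, {w | 0 < w j} := by ext w; simp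
    have h2 : MeasurableSet {w : Fin m → ℝ | ∀ j, 0 < w j} := by
      rw [h1]
      exact MeasurableSet.iInter fun j =>
        measurableSet_lt measurable_const (measurable_pi_apply j)
    exact h2.inter (measurableSet_lt
      (Finset.measurable_sum _ fun j _ => measurable_pi_apply j) measurable_const)
  set W : Set (Fin m → ℝ) :=
    simplexParam (m+1) ⁻¹' B ∩ {w : Fin m → ℝ | (∀ j, 0 < w j) ∧ ∑ j, w j < 1} with hWdef
  have hWmeas : MeasurableSet W := (hB.preimage sp_measurable).inter hS
  set e := MeasurableEquiv.piFinSuccAbove (fun _ : Fin (m+1) => ℝ) (Fin.last m) with hedef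
  have he : ∀ x : Fin (m+1) → ℝ, e x = (x (Fin.last m), pC m x) := by
    intro x
    have h2 : (fun j => x ((Fin.last m).succAbove j)) = pC m x := by
      funext j; rw [Fin.succAbove_last]; rfl
    simp only [hedef, MeasurableEquiv.piFinSuccAbove, MeasurableEquiv.coe_mk,
      Fin.insertNthEquiv, Equiv.symm, Equiv.coe_fn_mk]
    refine Prod.ext rfl ?_
    funext j
    show x ((Fin.last m).succAbove j) = _
    rw [Fin.succAbove_last]
    rfl
  set D : Set (Fin (m+1) → ℝ) := e ⁻¹' (Ioi r ×ˢ W) with hDdef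
  have hDmeas : MeasurableSet D := e.measurable (measurableSet_Ioi.prod hWmeas)
  have hD : ∀ x : Fin (m+1) → ℝ, x ∈ D ↔ r < x (Fin.last m) ∧ pC m x ∈ W := by
    intro x
    rw [hDdef, Set.mem_preimage, he x, Set.mem_prod]
    rfl
  -- the integration domain is the image of `D` under `Phi`
  have himg : {z : Fin (m+1) → ℝ | (∀ i, 0 < z i) ∧ r < l1 z ∧ (fun i => z i / l1 z) ∈ B}
      = Phi m '' D := by
    ext z
    constructor
    · rintro ⟨hpos, hrl, hzB⟩
      have hsum : l1 z = ∑ i, z i := l1_eq_sum fun i => (hpos i).le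
      have ht0 : 0 < l1 z := lt_trans hr hrl
      have htne : l1 z ≠ 0 := ne_of_gt ht0
      set t := l1 z with htdef
      set x : Fin (m+1) → ℝ := Fin.snoc (fun j : Fin m => z j.castSucc / t) t with hxdef
      have hxlast : x (Fin.last m) = t := by simp [hxdef]
      have hxC : pC m x = fun j : Fin m => z j.castSucc / t := by
        funext j
        simp [hxdef, pC]
      have hsum2 : t = (∑ j : Fin m, z j.castSucc) + z (Fin.last m) :=
        hsum.trans (Fin.sum_univ_castSucc fun i => z i)
      have hparam : simplexParam (m+1) (pC m x) = fun i => z i / t := by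
        funext i
        by_cases hi : (i : ℕ) < m
        · rw [sp_lt _ hi, hxC]
          have h2 : ((⟨(i : ℕ), hi⟩ : Fin m).castSucc : Fin (m+1)) = i := Fin.ext rfl
          simp only [h2]
        · have hil : i = Fin.last m := Fin.ext (by have := i.isLt; simp only [Fin.val_last]; omega)
          subst hil
          rw [sp_last, hxC, ← Finset.sum_div]
          field_simp
          linarith
      refine ⟨x, ?_, ?_⟩
      · rw [hD x, hxlast]
        refine ⟨hrl, ?_, ?_, ?_⟩
        · show simplexParam (m+1) (pC m x) ∈ B
          rw [hparam]
          exact hzB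
        · intro j
          show 0 < pC m x j
          rw [hxC]
          exact div_pos (hpos _) ht0
        · show ∑ j : Fin m, pC m x j < 1
          rw [hxC, ← Finset.sum_div, div_lt_one ht0]
          have := hpos (Fin.last m)
          linarith
      · funext i
        by_cases hi : (i : ℕ) < m
        · have h2 : ((⟨(i : ℕ), hi⟩ : Fin m).castSucc : Fin (m+1)) = i := Fin.ext rfl
          have hxi : x i = z i / t := by
            rw [← h2, hxdef, Fin.snoc_castSucc, h2]
          rw [phi_apply_lt _ hi, hxlast, hxi, mul_div_cancel₀ _ htne]
        · have hil : i = Fin.last m := Fin.ext (by have := i.isLt; simp only [Fin.val_last]; omega)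
          subst hil
          rw [phi_apply_last, hxlast]
          have hcs : ∑ j : Fin m, x j.castSucc = (∑ j : Fin m, z j.castSucc) / t := by
            rw [Finset.sum_div]
            refine Finset.sum_congr rfl fun j _ => ?_
            simp [hxdef]
          rw [hcs]
          field_simp
          linarith
    · rintro ⟨x, hxD, rfl⟩
      rw [hD x] at hxD
      obtain ⟨hrt, hWx⟩ := hxD
      obtain ⟨hxB, hpos, hlt⟩ := hWx
      have ht0 : 0 < x (Fin.last m) := lt_trans hr hrt
      have hppos : ∀ i, 0 < simplexParam (m+1) (pC m x) i := sp_pos hpos hlt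
      have hzpos : ∀ i, 0 < Phi m x i := fun i => mul_pos ht0 (hppos i)
      have hl1 : l1 (Phi m x) = x (Fin.last m) := by
        rw [l1_eq_sum fun i => (hzpos i).le, phi_sum]
      have hdiv : (fun i => Phi m x i / l1 (Phi m x)) = simplexParam (m+1) (pC m x) := by
        funext i
        rw [hl1, Phi, mul_div_cancel_left₀ _ (ne_of_gt ht0)]
      refine ⟨hzpos, by rw [hl1]; exact hrt, by rw [hdiv]; exact hxB⟩
  have hinj : Set.InjOn (Phi m) D := by
    intro x₁ h₁ x₂ h₂ hx
    exact phi_inj (lt_trans hr ((hD x₁).1 h₁).1) hx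
  rw [himg,
    lintegral_image_eq_lintegral_abs_det_fderiv_mul volume hDmeas
      (fun x _ => (phi_hasFDerivAt x).hasFDerivWithinAt) hinj]
  set F := fun t : ℝ => ENNReal.ofReal (((m+1 : ℕ) : ℝ) * t ^ (-2 : ℝ)) with hFdef
  set G := fun y : Fin m → ℝ => ENNReal.ofReal (h (simplexParam (m+1) y)) with hGdef
  have hcong : ∀ x ∈ D,
      ENNReal.ofReal |(Phi' m x).det|
        * ENNReal.ofReal (((m+1 : ℕ) : ℝ) * (l1 (Phi m x)) ^ (-((m+1 : ℕ) : ℝ) - 1)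
            * h (fun i => Phi m x i / l1 (Phi m x)))
      = F (x (Fin.last m)) * G (pC m x) := by
    intro x hx
    rw [hD x] at hx
    obtain ⟨hrt, hxB, hposW, hltW⟩ := hx
    have ht0 : 0 < x (Fin.last m) := lt_trans hr hrt
    have hppos : ∀ i, 0 < simplexParam (m+1) (pC m x) i := sp_pos hposW hltW
    have hzpos : ∀ i, 0 < Phi m x i := fun i => mul_pos ht0 (hppos i)
    have hl1 : l1 (Phi m x) = x (Fin.last m) := by
      rw [l1_eq_sum fun i => (hzpos i).le, phi_sum]
    have hdiv : (fun i => Phi m x i / l1 (Phi m x)) = simplexParam (m+1) (pC m x) := by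
      funext i
      rw [hl1, Phi, mul_div_cancel_left₀ _ (ne_of_gt ht0)]
    rw [det_Phi', hdiv, hl1, abs_of_nonneg (pow_nonneg ht0.le m),
      ← ENNReal.ofReal_mul (pow_nonneg ht0.le m)]
    have h1 : x (Fin.last m) ^ m * x (Fin.last m) ^ (-((m+1 : ℕ) : ℝ) - 1)
        = x (Fin.last m) ^ (-2 : ℝ) := by
      rw [← Real.rpow_natCast (x (Fin.last m)) m, ← Real.rpow_add ht0]
      congr 1
      push_cast
      ring
    have hexp : x (Fin.last m) ^ m
          * (((m+1 : ℕ) : ℝ) * x (Fin.last m) ^ (-((m+1 : ℕ) : ℝ) - 1)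
              * h (simplexParam (m+1) (pC m x)))
        = (((m+1 : ℕ) : ℝ) * x (Fin.last m) ^ (-2 : ℝ))
            * h (simplexParam (m+1) (pC m x)) := by
      calc x (Fin.last m) ^ m
            * (((m+1 : ℕ) : ℝ) * x (Fin.last m) ^ (-((m+1 : ℕ) : ℝ) - 1)
                * h (simplexParam (m+1) (pC m x)))
          = ((m+1 : ℕ) : ℝ)
              * (x (Fin.last m) ^ m * x (Fin.last m) ^ (-((m+1 : ℕ) : ℝ) - 1))
              * h (simplexParam (m+1) (pC m x)) := by ring
        _ = (((m+1 : ℕ) : ℝ) * x (Fin.last m) ^ (-2 : ℝ))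
              * h (simplexParam (m+1) (pC m x)) := by rw [h1]
    rw [hexp, ENNReal.ofReal_mul (by positivity)]
  rw [setLIntegral_congr_fun hDmeas hcong]
  have hGmeas : Measurable G := (hmeas.comp sp_measurable).ennreal_ofReal
  have hint : IntegrableOn (fun t : ℝ => ((m+1 : ℕ) : ℝ) * t ^ (-2 : ℝ)) (Ioi r) :=
    (integrableOn_Ioi_rpow_of_lt (by norm_num) hr).const_mul _
  have hFae : AEMeasurable F (volume.restrict (Ioi r)) :=
    hint.aemeasurable.ennreal_ofReal
  have hstep : ∫⁻ x in D, F (x (Fin.last m)) * G (pC m x)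
      = ∫⁻ p in Ioi r ×ˢ W, F p.1 * G p.2 := by
    have hcp := (volume_preserving_piFinSuccAbove (fun _ : Fin (m+1) => ℝ)
        (Fin.last m)).setLIntegral_comp_preimage_emb
        (MeasurableEquiv.measurableEmbedding _)
        (fun p : ℝ × (Fin m → ℝ) => F p.1 * G p.2) (Ioi r ×ˢ W)
    rw [hDdef, ← hcp]
    refine setLIntegral_congr_fun (e.measurable (measurableSet_Ioi.prod hWmeas))
      (fun x _ => ?_)
    rw [he x]
  rw [hstep,
    show (volume : Measure (ℝ × (Fin m → ℝ))).restrict (Ioi r ×ˢ W)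
        = ((volume : Measure ℝ).restrict (Ioi r)).prod (volume.restrict W) from
      (Measure.prod_restrict _ _).symm,
    lintegral_prod_mul hFae hGmeas.aemeasurable]
  have hGint : ∫⁻ y in W, G y
      = ∫⁻ w in B, ENNReal.ofReal (h w) ∂(simplexMeasure (m+1)) := by
    rw [simplexMeasure, setLIntegral_map hB hmeas.ennreal_ofReal sp_measurable,
      Measure.restrict_restrict (hB.preimage sp_measurable)]
    rfl
  have hFint : ∫⁻ t in Ioi r, F t = ENNReal.ofReal (((m+1 : ℕ) : ℝ) * r⁻¹) := by
    have hnn : 0 ≤ᵐ[volume.restrict (Ioi r)]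
        fun t : ℝ => ((m+1 : ℕ) : ℝ) * t ^ (-2 : ℝ) := by
      filter_upwards [ae_restrict_mem measurableSet_Ioi] with t ht
      have h0t : (0:ℝ) < t := hr.trans ht
      positivity
    rw [hFdef, ← ofReal_integral_eq_lintegral_ofReal hint hnn,
      integral_const_mul, integral_Ioi_rpow_of_lt (by norm_num) hr]
    norm_num [Real.rpow_neg_one]
  rw [hGint, hFint]


end
end

section
/- For θ ∈ (0,1) let V_θ(z) = ( ∑_{j=1}^k z_j^{−1/θ} )^θ on (0,∞)^k. Then for every θ0 ∈ (0,1) there exist a neighborhood Θ0 ⊂ (0,1) of θ0, a constant A > 0 and an exponent α ∈ (0,1/2) such that for all θ ∈ Θ0, all z ∈ (0,∞)^k with ‖z‖_∞ = 1 and all nonempty τ ⊂ {1,…,k}: |∂_θ log V_θ(z)| ≤ A ∑_{i=1}^k z_i^{−α} and |∂_θ log( −∂_τ V_θ(z) )| ≤ A ∑_{i=1}^k z_i^{−α}. -/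
open MeasureTheory Real Set Filter

noncomputable section

/-- Iterated (mixed) partial derivative of `V` with respect to the coordinates in `τ`,
each exactly once. -/
noncomputable def mixedPartial {k : ℕ} (τ : Finset (Fin k)) (V : (Fin k → ℝ) → ℝ) :
    (Fin k → ℝ) → ℝ :=
  τ.toList.foldr (fun i F z => deriv (fun t => F (Function.update z i t)) (z i)) V

/-- The logistic exponent function `V_θ(z) = (∑ⱼ zⱼ^{−1/θ})^θ`. -/
noncomputable def Vlog {k : ℕ} (θ : ℝ) (z : Fin k → ℝ) : ℝ :=
  (∑ j, (z j) ^ (-1/θ)) ^ θ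

/-! ### Auxiliary definitions -/

noncomputable def cc (θ : ℝ) : ℕ → ℝ
  | 0 => 1
  | (m+1) => ((m : ℝ)/θ - 1) * cc θ m

noncomputable def Dc (θ : ℝ) : ℕ → ℝ
  | 0 => 0
  | (m+1) => (-(m : ℝ)/θ^2) * cc θ m + ((m : ℝ)/θ - 1) * Dc θ m

noncomputable def Sf {k : ℕ} (z : Fin k → ℝ) (θ : ℝ) : ℝ := ∑ j, (z j) ^ (-1/θ)

noncomputable def Sd {k : ℕ} (z : Fin k → ℝ) (θ : ℝ) : ℝ :=
  ∑ j, (z j) ^ (-1/θ) * Real.log (z j) * (θ^2)⁻¹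

/-! ### Elementary facts about `cc` -/

lemma cc_neg {θ : ℝ} (hθ : θ ∈ Set.Ioo (0:ℝ) 1) : ∀ m, 1 ≤ m → cc θ m < 0 := by
  intro m hm
  induction m with
  | zero => omega
  | succ n ih =>
    rcases Nat.lt_or_ge 1 (n+1) with h | h
    · have hn : 1 ≤ n := by omega
      have h1 : (0:ℝ) < (n:ℝ)/θ - 1 := by
        have : (1:ℝ) ≤ (n:ℝ) := by exact_mod_cast hn
        have h2 : (n:ℝ)/θ > n := by
          rw [gt_iff_lt, lt_div_iff₀ hθ.1]
          nlinarith [hθ.2]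
        linarith
      have := ih hn
      have : ((n:ℝ)/θ - 1) * cc θ n < 0 := mul_neg_of_pos_of_neg h1 this
      simpa [cc] using this
    · have : n = 0 := by omega
      subst this
      simp [cc]

/-! ### The closed form of the mixed partial derivative -/

lemma foldr_eq {k : ℕ} {θ : ℝ} (hθ : θ ∈ Set.Ioo (0:ℝ) 1) :
    ∀ (l : List (Fin k)), l.Nodup → ∀ (z : Fin k → ℝ), (∀ i, 0 < z i) →
    (l.foldr (fun i F z => deriv (fun t => F (Function.update z i t)) (z i)) (Vlog θ)) z
      = cc θ l.length * (∑ j, (z j) ^ (-1/θ)) ^ (θ - (l.length : ℝ))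
          * (l.map (fun i => (z i) ^ (-1/θ - 1))).prod := by
  intro l
  induction l with
  | nil =>
    intro _ z hz
    simp [Vlog, cc]
  | cons i l ih =>
    intro hnd z hz
    have hil : i ∉ l := (List.nodup_cons.mp hnd).1
    have hl : l.Nodup := (List.nodup_cons.mp hnd).2
    have hzi : 0 < z i := hz i
    set p : ℝ := -1/θ with hp
    set m : ℕ := l.length with hm
    set B : ℝ := ∑ j ∈ Finset.univ.erase i, (z j) ^ p with hB
    set K : ℝ := (l.map (fun j => (z j) ^ (p - 1))).prod with hK
    have hBnn : 0 ≤ B := Finset.sum_nonneg fun j _ => (Real.rpow_pos_of_pos (hz j) p).le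
    have hEq : (fun t => (l.foldr (fun i F z => deriv (fun t => F (Function.update z i t)) (z i))
          (Vlog θ)) (Function.update z i t))
        =ᶠ[nhds (z i)] (fun t => cc θ m * (B + t ^ p) ^ (θ - (m:ℝ)) * K) := by
      filter_upwards [eventually_gt_nhds hzi] with t ht
      have hzt : ∀ j, 0 < Function.update z i t j := by
        intro j
        rcases eq_or_ne j i with rfl | hj
        · simpa using ht
        · simpa [Function.update_of_ne hj] using hz j
      rw [ih hl _ hzt]
      have hs : (∑ j, (Function.update z i t j) ^ p) = B + t ^ p := by
        have h2 : (fun j => (Function.update z i t j) ^ p)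
            = Function.update (fun j => (z j) ^ p) i (t ^ p) := by
          funext j
          exact Function.apply_update (fun _ v => v ^ p) z i t j
        rw [h2, Finset.sum_update_of_mem (Finset.mem_univ i), add_comm, hB, Finset.erase_eq]
      have hmK : List.map (fun j => (Function.update z i t j) ^ (p - 1)) l
          = List.map (fun j => (z j) ^ (p - 1)) l := by
        apply List.map_congr_left
        intro j hj
        have : j ≠ i := fun h => hil (h ▸ hj)
        rw [Function.update_of_ne this]
      rw [hs, hmK]
    rw [List.foldr_cons, hEq.deriv_eq]
    have hBt : 0 < B + (z i) ^ p := by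
      have := Real.rpow_pos_of_pos hzi p
      linarith
    have h1 : HasDerivAt (fun t : ℝ => t ^ p) (p * (z i) ^ (p - 1)) (z i) :=
      Real.hasDerivAt_rpow_const (Or.inl hzi.ne')
    have h2 : HasDerivAt (fun t : ℝ => B + t ^ p) (p * (z i) ^ (p - 1)) (z i) := by
      simpa using (hasDerivAt_const (z i) B).fun_add h1
    have h3 : HasDerivAt (fun t : ℝ => (B + t ^ p) ^ (θ - (m:ℝ)))
        ((p * (z i) ^ (p - 1)) * (θ - (m:ℝ)) * (B + (z i) ^ p) ^ ((θ - (m:ℝ)) - 1)) (z i) :=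
      h2.rpow_const (Or.inl hBt.ne')
    have h4 := (h3.const_mul (cc θ m)).mul_const K
    rw [h4.deriv]
    have hsum : B + (z i) ^ p = ∑ j, (z j) ^ p := by
      rw [hB, Finset.sum_erase_add Finset.univ _ (Finset.mem_univ i)]
    rw [hsum, List.map_cons, List.prod_cons, List.length_cons]
    have hcast : θ - (((l.length + 1 : ℕ)) : ℝ) = (θ - (m:ℝ)) - 1 := by
      push_cast [hm]
      ring
    rw [hcast]
    have hcc : cc θ (l.length + 1) = ((m:ℝ)/θ - 1) * cc θ m := rfl
    rw [hcc]
    have hpq : p * (θ - (m:ℝ)) = (m:ℝ)/θ - 1 := by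
      have h0 : θ ≠ 0 := ne_of_gt hθ.1
      rw [hp]
      field_simp
      ring
    rw [← hpq]
    ring

/-! ### Derivatives in `θ` -/

lemma hasDerivAt_cc {θ : ℝ} (hθ : θ ≠ 0) (m : ℕ) :
    HasDerivAt (fun θ' => cc θ' m) (Dc θ m) θ := by
  induction m with
  | zero => simpa [cc, Dc] using hasDerivAt_const θ (1:ℝ)
  | succ n ih =>
    have h1 : HasDerivAt (fun θ' : ℝ => (n : ℝ)/θ' - 1) (-(n:ℝ)/θ^2) θ := by
      have := ((hasDerivAt_inv hθ).const_mul (n:ℝ)).sub_const 1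
      convert! this using 1
      ring
    have h2 := h1.fun_mul ih
    have he : (fun θ' => cc θ' (n+1)) = fun θ' => ((n:ℝ)/θ' - 1) * cc θ' n := by
      funext θ'; rfl
    rw [he]
    convert! h2 using 1

lemma hasDerivAt_neg_one_div {θ : ℝ} (hθ : θ ≠ 0) :
    HasDerivAt (fun θ' : ℝ => -1/θ') ((θ^2)⁻¹) θ := by
  have := (hasDerivAt_inv hθ).fun_neg
  convert! this using 1
  · funext x; rw [neg_div, one_div]
  · simp

lemma hasDerivAt_Sf {k : ℕ} {θ : ℝ} (hθ : 0 < θ) (z : Fin k → ℝ) (hz : ∀ i, 0 < z i) :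
    HasDerivAt (fun θ' => Sf z θ') (Sd z θ) θ := by
  unfold Sf Sd
  apply HasDerivAt.fun_sum
  intro j _
  have h1 := (Real.hasStrictDerivAt_const_rpow (hz j) (-1/θ)).hasDerivAt
  have h2 := h1.comp θ (hasDerivAt_neg_one_div hθ.ne')
  convert! h2 using 2

lemma Sf_pos {k : ℕ} (hk : 1 ≤ k) {θ : ℝ} (hθ : 0 < θ) (z : Fin k → ℝ)
    (hz : ∀ i, 0 < z i) : 0 < Sf z θ := by
  have : Nonempty (Fin k) := Fin.pos_iff_nonempty.mp hk
  exact Finset.sum_pos (fun j _ => Real.rpow_pos_of_pos (hz j) _) Finset.univ_nonempty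

lemma mixed_eq {k : ℕ} {θ : ℝ} (hθ : θ ∈ Set.Ioo (0:ℝ) 1) (τ : Finset (Fin k))
    (z : Fin k → ℝ) (hz : ∀ i, 0 < z i) :
    mixedPartial τ (Vlog θ) z
      = cc θ τ.card * (Sf z θ) ^ (θ - (τ.card : ℝ)) * ∏ i ∈ τ, (z i) ^ (-1/θ - 1) := by
  unfold mixedPartial
  rw [foldr_eq hθ τ.toList τ.nodup_toList z hz, Finset.length_toList,
    Finset.prod_map_toList]
  rfl

lemma log_neg_mixed_eq {k : ℕ} (hk : 1 ≤ k) {θ : ℝ} (hθ : θ ∈ Set.Ioo (0:ℝ) 1)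
    (τ : Finset (Fin k)) (hτ : τ.Nonempty) (z : Fin k → ℝ) (hz : ∀ i, 0 < z i) :
    Real.log (- mixedPartial τ (Vlog θ) z)
      = Real.log (- cc θ τ.card) + (θ - (τ.card : ℝ)) * Real.log (Sf z θ)
        + (-1/θ - 1) * ∑ i ∈ τ, Real.log (z i) := by
  have hm : 1 ≤ τ.card := Finset.card_pos.mpr hτ
  have hS := Sf_pos hk hθ.1 z hz
  have hcneg : cc θ τ.card < 0 := cc_neg hθ τ.card hm
  have hP : (0:ℝ) < ∏ i ∈ τ, (z i) ^ (-1/θ - 1) :=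
    Finset.prod_pos fun i _ => Real.rpow_pos_of_pos (hz i) _
  have hX : (0:ℝ) < (Sf z θ) ^ (θ - (τ.card : ℝ)) := Real.rpow_pos_of_pos hS _
  rw [mixed_eq hθ τ z hz]
  have h1 : -(cc θ τ.card * (Sf z θ) ^ (θ - (τ.card : ℝ)) * ∏ i ∈ τ, (z i) ^ (-1/θ - 1))
      = (- cc θ τ.card) * ((Sf z θ) ^ (θ - (τ.card : ℝ)) * ∏ i ∈ τ, (z i) ^ (-1/θ - 1)) := by
    ring
  rw [h1, Real.log_mul (by linarith) (by positivity),
    Real.log_mul (by positivity) (by positivity),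
    Real.log_rpow hS]
  have h2 : Real.log (∏ i ∈ τ, (z i) ^ (-1/θ - 1)) = (-1/θ - 1) * ∑ i ∈ τ, Real.log (z i) := by
    rw [Real.log_prod (fun i _ => (Real.rpow_pos_of_pos (hz i) _).ne')]
    rw [Finset.mul_sum]
    exact Finset.sum_congr rfl fun i _ => Real.log_rpow (hz i) _
  rw [h2]
  ring

lemma deriv_log_neg_mixed {k : ℕ} (hk : 1 ≤ k) {θ : ℝ} (hθ : θ ∈ Set.Ioo (0:ℝ) 1)
    (τ : Finset (Fin k)) (hτ : τ.Nonempty) (z : Fin k → ℝ) (hz : ∀ i, 0 < z i) :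
    deriv (fun θ' => Real.log (- mixedPartial τ (Vlog θ') z)) θ
      = Dc θ τ.card / cc θ τ.card + (Real.log (Sf z θ)
          + (θ - (τ.card : ℝ)) * (Sd z θ / Sf z θ))
        + (θ^2)⁻¹ * ∑ i ∈ τ, Real.log (z i) := by
  have hm : 1 ≤ τ.card := Finset.card_pos.mpr hτ
  have hEq : (fun θ' => Real.log (- mixedPartial τ (Vlog θ') z))
      =ᶠ[nhds θ] (fun θ' => Real.log (- cc θ' τ.card)
          + (θ' - (τ.card : ℝ)) * Real.log (Sf z θ')
          + (-1/θ' - 1) * ∑ i ∈ τ, Real.log (z i)) := by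
    filter_upwards [isOpen_Ioo.mem_nhds hθ] with θ' hθ'
    exact log_neg_mixed_eq hk hθ' τ hτ z hz
  rw [hEq.deriv_eq]
  have hS := Sf_pos hk hθ.1 z hz
  have hcneg : cc θ τ.card < 0 := cc_neg hθ τ.card hm
  have h1 : HasDerivAt (fun θ' => Real.log (- cc θ' τ.card))
      (Dc θ τ.card / cc θ τ.card) θ := by
    have := ((hasDerivAt_cc hθ.1.ne' τ.card).fun_neg).log (by simpa using hcneg.ne)
    convert this using 1
    rw [neg_div_neg_eq]
  have h2 : HasDerivAt (fun θ' => Real.log (Sf z θ')) (Sd z θ / Sf z θ) θ :=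
    (hasDerivAt_Sf hθ.1 z hz).log hS.ne'
  have h3 : HasDerivAt (fun θ' : ℝ => θ' - (τ.card : ℝ)) 1 θ :=
    (hasDerivAt_id θ).sub_const _
  have h4 := h3.fun_mul h2
  have h5 : HasDerivAt (fun θ' : ℝ => -1/θ' - 1) ((θ^2)⁻¹) θ :=
    (hasDerivAt_neg_one_div hθ.1.ne').sub_const 1
  have h6 := h5.mul_const (∑ i ∈ τ, Real.log (z i))
  have := (h1.fun_add h4).fun_add h6
  rw [this.deriv]
  ring

lemma deriv_log_Vlog {k : ℕ} (hk : 1 ≤ k) {θ : ℝ} (hθ : θ ∈ Set.Ioo (0:ℝ) 1)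
    (z : Fin k → ℝ) (hz : ∀ i, 0 < z i) :
    deriv (fun θ' => Real.log (Vlog θ' z)) θ
      = Real.log (Sf z θ) + θ * (Sd z θ / Sf z θ) := by
  have hEq : (fun θ' => Real.log (Vlog θ' z))
      =ᶠ[nhds θ] (fun θ' => θ' * Real.log (Sf z θ')) := by
    filter_upwards [isOpen_Ioo.mem_nhds hθ] with θ' hθ'
    have hv : Vlog θ' z = (Sf z θ') ^ θ' := rfl
    rw [hv, Real.log_rpow (Sf_pos hk hθ'.1 z hz)]
  rw [hEq.deriv_eq]
  have h2 : HasDerivAt (fun θ' => Real.log (Sf z θ')) (Sd z θ / Sf z θ) θ :=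
    (hasDerivAt_Sf hθ.1 z hz).log (Sf_pos hk hθ.1 z hz).ne'
  have hid : HasDerivAt (fun θ' : ℝ => θ') 1 θ := hasDerivAt_id θ
  have := hid.fun_mul h2
  rw [this.deriv]
  ring

/-! ### Bound on `Dc/cc` -/

lemma Dc_abs_le {a b θ : ℝ} (ha : 0 < a) (hb : b < 1) (hθ : θ ∈ Set.Ioo a b) :
    ∀ m : ℕ, |Dc θ m| ≤ (m : ℝ) * (b/(a^2*(1-b))) * |cc θ m| := by
  have haθ := hθ.1
  have hθb := hθ.2
  have hθ0 : 0 < θ := ha.trans haθ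
  have hb0 : 0 < b := hθ0.trans hθb
  have hb0' : 0 < 1 - b := by linarith
  have hγ0 : 0 < b/(a^2*(1-b)) := by positivity
  set γ : ℝ := b/(a^2*(1-b)) with hγ
  intro m
  induction m with
  | zero => simp [Dc]
  | succ n ih =>
    rcases Nat.eq_zero_or_pos n with rfl | hn
    · norm_num [Dc, cc]
      exact hγ0.le
    have hn1 : (1:ℝ) ≤ (n:ℝ) := by exact_mod_cast hn
    have hpos : 0 < (n:ℝ)/θ - 1 := by
      have : (n:ℝ)/θ > n := by
        rw [gt_iff_lt, lt_div_iff₀ hθ0]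
        nlinarith
      linarith
    have key : (n:ℝ)/θ^2 ≤ γ * ((n:ℝ)/θ - 1) := by
      have e1 : (n:ℝ)*(1-b)/b ≤ (n:ℝ)/θ - 1 := by
        have h1 : (n:ℝ)/b ≤ (n:ℝ)/θ :=
          div_le_div_of_nonneg_left (by positivity) hθ0 hθb.le
        have h2 : (n:ℝ)*(1-b)/b ≤ (n:ℝ)/b - 1 := by
          rw [div_sub' hb0.ne', div_le_div_iff₀ hb0 hb0]
          nlinarith [mul_nonneg (mul_pos hb0 hb0).le (sub_nonneg.mpr hn1)]
        linarith
      have e2 : γ * ((n:ℝ)*(1-b)/b) ≤ γ * ((n:ℝ)/θ - 1) :=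
        mul_le_mul_of_nonneg_left e1 hγ0.le
      have e3 : γ * ((n:ℝ)*(1-b)/b) = (n:ℝ) / a^2 := by
        rw [hγ]
        field_simp
      have e4 : (n:ℝ)/θ^2 ≤ (n:ℝ)/a^2 := by
        apply div_le_div_of_nonneg_left (by positivity) (by positivity)
        nlinarith
      linarith
    have hDc : Dc θ (n+1) = (-(n:ℝ)/θ^2) * cc θ n + ((n:ℝ)/θ - 1) * Dc θ n := rfl
    have hcc : cc θ (n+1) = ((n:ℝ)/θ - 1) * cc θ n := rfl
    rw [hDc, hcc]
    calc |(-(n:ℝ)/θ^2) * cc θ n + ((n:ℝ)/θ - 1) * Dc θ n|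
        ≤ |(-(n:ℝ)/θ^2) * cc θ n| + |((n:ℝ)/θ - 1) * Dc θ n| := abs_add_le _ _
      _ = ((n:ℝ)/θ^2) * |cc θ n| + ((n:ℝ)/θ - 1) * |Dc θ n| := by
          rw [abs_mul, abs_mul, abs_of_pos hpos, abs_div, abs_neg,
            abs_of_nonneg (by positivity : (0:ℝ) ≤ (n:ℝ)),
            abs_of_pos (by positivity : (0:ℝ) < θ^2)]
      _ ≤ ((n:ℝ)/θ^2) * |cc θ n| + ((n:ℝ)/θ - 1) * ((n:ℝ) * γ * |cc θ n|) := by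
          have := mul_le_mul_of_nonneg_left ih hpos.le
          linarith
      _ ≤ ((n:ℝ)+1) * γ * |((n:ℝ)/θ - 1) * cc θ n| := by
          rw [abs_mul, abs_of_pos hpos]
          nlinarith [abs_nonneg (cc θ n), key, hpos, hγ0]
      _ = (((n+1 : ℕ)):ℝ) * γ * |((n:ℝ)/θ - 1) * cc θ n| := by push_cast; ring

/-! ### The main statement -/

set_option maxHeartbeats 1000000 in
/-- (Lemma 2 of the paper: the logistic model satisfies condition A3)).
For every `θ0 ∈ (0,1)` there are a neighborhood `Θ0 ⊆ (0,1)` of `θ0`, `A > 0` and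
`α ∈ (0,1/2)` such that for all `θ ∈ Θ0`, all `z ∈ (0,∞)^k` with `‖z‖_∞ = 1` and all
nonempty `τ`, `|∂_θ log V_θ(z)| ≤ A ∑ᵢ zᵢ^{−α}` and
`|∂_θ log(−∂_τ V_θ(z))| ≤ A ∑ᵢ zᵢ^{−α}`.
(The norm on `Fin k → ℝ` is the sup-norm.) -/
theorem stmt11 {k : ℕ} (hk : 1 ≤ k) (θ0 : ℝ) (hθ0 : θ0 ∈ Set.Ioo (0 : ℝ) 1) :
    ∃ Θ0 : Set ℝ, IsOpen Θ0 ∧ θ0 ∈ Θ0 ∧ Θ0 ⊆ Set.Ioo (0 : ℝ) 1 ∧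
      ∃ A : ℝ, 0 < A ∧ ∃ α : ℝ, 0 < α ∧ α < 1/2 ∧
        ∀ θ ∈ Θ0, ∀ z : Fin k → ℝ, (∀ i, 0 < z i) → ‖z‖ = 1 →
          |deriv (fun θ' => Real.log (Vlog θ' z)) θ| ≤ A * ∑ i, (z i) ^ (-α) ∧
          ∀ τ : Finset (Fin k), τ.Nonempty →
            |deriv (fun θ' => Real.log (- mixedPartial τ (Vlog θ') z)) θ|
              ≤ A * ∑ i, (z i) ^ (-α) := by
  obtain ⟨hθ0a, hθ0b⟩ := hθ0
  set a : ℝ := θ0/2 with hadef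
  set b : ℝ := (1+θ0)/2 with hbdef
  have ha : 0 < a := by positivity
  have hab : a < θ0 := by rw [hadef]; linarith
  have hbθ : θ0 < b := by rw [hbdef]; linarith
  have hb1 : b < 1 := by rw [hbdef]; linarith
  have hsub : Set.Ioo a b ⊆ Set.Ioo (0:ℝ) 1 :=
    fun x hx => ⟨ha.trans hx.1, hx.2.trans hb1⟩
  have hb0' : 0 < 1 - b := by linarith
  set γ : ℝ := b/(a^2*(1-b)) with hγdef
  have hγ0 : 0 < γ := by positivity
  set A : ℝ := (k:ℝ)*γ + k + 4/a + 4*((k:ℝ)+2)/a^2 with hAdef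
  have hk1 : (1:ℝ) ≤ (k:ℝ) := by exact_mod_cast hk
  have hA : 0 < A := by
    have : (0:ℝ) < (k:ℝ)*γ := by positivity
    have : (0:ℝ) < 4/a := by positivity
    have : (0:ℝ) < 4*((k:ℝ)+2)/a^2 := by positivity
    rw [hAdef]; positivity
  refine ⟨Set.Ioo a b, isOpen_Ioo, ⟨hab, hbθ⟩, hsub, A, hA, 1/4, by norm_num, by norm_num, ?_⟩
  intro θ hθ z hz hzn
  have hθ01 : θ ∈ Set.Ioo (0:ℝ) 1 := hsub hθ
  -- basic facts about z
  have hz1 : ∀ i, z i ≤ 1 := by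
    intro i
    have h := norm_le_pi_norm z i
    rw [hzn, Real.norm_eq_abs] at h
    exact (abs_le.mp h).2
  set T : ℝ := ∑ i, (z i) ^ (-(1/4 : ℝ)) with hTdef
  have hterm1 : ∀ i : Fin k, (1:ℝ) ≤ (z i) ^ (-(1/4 : ℝ)) := by
    intro i
    have := Real.rpow_le_rpow_of_exponent_ge (hz i) (hz1 i)
      (by norm_num : (-(1/4):ℝ) ≤ 0)
    rwa [Real.rpow_zero] at this
  have hTk : (k:ℝ) ≤ T := by
    rw [hTdef]
    calc (k:ℝ) = ∑ _i : Fin k, (1:ℝ) := by simp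
      _ ≤ ∑ i, (z i) ^ (-(1/4 : ℝ)) := Finset.sum_le_sum fun i _ => hterm1 i
  have hT1 : (1:ℝ) ≤ T := hk1.trans hTk
  set L : ℝ := ∑ j, -Real.log (z j) with hLdef
  have hlogz : ∀ j, Real.log (z j) ≤ 0 := fun j => Real.log_nonpos (hz j).le (hz1 j)
  have hL0 : 0 ≤ L := Finset.sum_nonneg fun j _ => by linarith [hlogz j]
  have hL4 : L ≤ 4 * T := by
    rw [hLdef, hTdef, Finset.mul_sum]
    apply Finset.sum_le_sum
    intro j _
    have h := Real.log_le_sub_one_of_pos (Real.rpow_pos_of_pos (hz j) (-(1/4 : ℝ)))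
    rw [Real.log_rpow (hz j)] at h
    linarith
  set S : ℝ := Sf z θ with hSdef
  have hS0 : 0 < S := Sf_pos hk hθ01.1 z hz
  have htermS : ∀ j : Fin k, (1:ℝ) ≤ (z j) ^ (-1/θ) := by
    intro j
    have := Real.rpow_le_rpow_of_exponent_ge (hz j) (hz1 j)
      (by rw [neg_div]; exact neg_nonpos.mpr (div_nonneg zero_le_one hθ01.1.le) : (-1/θ:ℝ) ≤ 0)
    rwa [Real.rpow_zero] at this
  have hSk : (k:ℝ) ≤ S := by
    rw [hSdef, Sf]
    calc (k:ℝ) = ∑ _j : Fin k, (1:ℝ) := by simp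
      _ ≤ ∑ j, (z j) ^ (-1/θ) := Finset.sum_le_sum fun j _ => htermS j
  have hlogS0 : 0 ≤ Real.log S := Real.log_nonneg (hk1.trans hSk)
  -- upper bound for log S
  have hterma : ∀ j : Fin k, (1:ℝ) ≤ (z j) ^ (-1/a : ℝ) := by
    intro j
    have := Real.rpow_le_rpow_of_exponent_ge (hz j) (hz1 j)
      (by rw [neg_div]; exact neg_nonpos.mpr (div_nonneg zero_le_one ha.le) : (-1/a:ℝ) ≤ 0)
    rwa [Real.rpow_zero] at this
  have hlogS : Real.log S ≤ (k:ℝ) + (1/a) * L := by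
    have hprod : (0:ℝ) < ∏ j, (z j) ^ (-1/a : ℝ) :=
      Finset.prod_pos fun j _ => Real.rpow_pos_of_pos (hz j) _
    have hSle : S ≤ (k:ℝ) * ∏ j, (z j) ^ (-1/a : ℝ) := by
      rw [hSdef, Sf]
      calc (∑ j, (z j) ^ (-1/θ))
          ≤ ∑ j : Fin k, (z j) ^ (-1/a : ℝ) := by
            apply Finset.sum_le_sum
            intro j _
            apply Real.rpow_le_rpow_of_exponent_ge (hz j) (hz1 j)
            rw [neg_div, neg_div, neg_le_neg_iff]
            exact one_div_le_one_div_of_le ha hθ.1.le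
        _ ≤ ∑ _j : Fin k, ∏ l, (z l) ^ (-1/a : ℝ) := by
            apply Finset.sum_le_sum
            intro j _
            have hpr := Finset.prod_le_prod
              (f := fun l => if l = j then (z j) ^ (-1/a : ℝ) else 1)
              (g := fun l => (z l) ^ (-1/a : ℝ)) (s := Finset.univ)
              (fun l _ => by
                show (0:ℝ) ≤ if l = j then (z j) ^ (-1/a : ℝ) else 1
                split <;> [exact (Real.rpow_pos_of_pos (hz j) _).le; norm_num])
              (fun l _ => by
                show (if l = j then (z j) ^ (-1/a : ℝ) else 1) ≤ (z l) ^ (-1/a : ℝ)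
                by_cases h : l = j
                · subst h; simp
                · simp only [h, if_false]; exact hterma l)
            simpa [Finset.prod_ite_eq'] using hpr
        _ = (k:ℝ) * ∏ l, (z l) ^ (-1/a : ℝ) := by
            rw [Finset.sum_const]; simp
    have h1 : Real.log S ≤ Real.log ((k:ℝ) * ∏ j, (z j) ^ (-1/a : ℝ)) :=
      Real.log_le_log hS0 hSle
    have h2 : Real.log ((k:ℝ) * ∏ j, (z j) ^ (-1/a : ℝ))
        = Real.log (k:ℝ) + Real.log (∏ j, (z j) ^ (-1/a : ℝ)) :=
      Real.log_mul (by positivity) hprod.ne'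
    have h3 : Real.log (∏ j, (z j) ^ (-1/a : ℝ)) = (1/a) * L := by
      rw [Real.log_prod (fun j _ => (Real.rpow_pos_of_pos (hz j) _).ne'), hLdef,
        Finset.mul_sum]
      apply Finset.sum_congr rfl
      intro j _
      rw [Real.log_rpow (hz j)]
      ring
    have h4 : Real.log (k:ℝ) ≤ (k:ℝ) := by
      have := Real.log_le_sub_one_of_pos (by positivity : (0:ℝ) < (k:ℝ))
      linarith
    rw [h2, h3] at h1
    linarith
  -- bound for |Sd/S|
  have hSd : |Sd z θ / S| ≤ (1/a^2) * L := by
    have hθa2 : (θ^2)⁻¹ ≤ (a^2)⁻¹ := by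
      apply inv_anti₀ (by positivity)
      nlinarith [hθ.1, ha]
    have habs : |Sd z θ| ≤ (1/a^2) * S * L := by
      have h1 : |Sd z θ| ≤ ∑ j, |(z j) ^ (-1/θ) * Real.log (z j) * (θ^2)⁻¹| :=
        Finset.abs_sum_le_sum_abs _ _
      have h2 : ∀ j : Fin k, |(z j) ^ (-1/θ) * Real.log (z j) * (θ^2)⁻¹|
          ≤ (1/a^2) * S * (-Real.log (z j)) := by
        intro j
        have hr0 : (0:ℝ) < (z j) ^ (-1/θ) := Real.rpow_pos_of_pos (hz j) _
        have hrS : (z j) ^ (-1/θ) ≤ S := by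
          rw [hSdef, Sf]
          exact Finset.single_le_sum
            (fun l _ => (Real.rpow_pos_of_pos (hz l) _).le) (Finset.mem_univ j)
        rw [abs_mul, abs_mul, abs_of_pos hr0, abs_of_nonneg (by positivity : (0:ℝ) ≤ (θ^2)⁻¹),
          abs_of_nonpos (hlogz j)]
        calc (z j) ^ (-1/θ) * -Real.log (z j) * (θ^2)⁻¹
            ≤ S * -Real.log (z j) * (a^2)⁻¹ := by
              apply mul_le_mul
              · exact mul_le_mul_of_nonneg_right hrS (by linarith [hlogz j])
              · exact hθa2
              · positivity
              · exact mul_nonneg hS0.le (by linarith [hlogz j])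
          _ = (1/a^2) * S * (-Real.log (z j)) := by ring
      calc |Sd z θ| ≤ ∑ j, |(z j) ^ (-1/θ) * Real.log (z j) * (θ^2)⁻¹| := h1
        _ ≤ ∑ j, (1/a^2) * S * (-Real.log (z j)) := Finset.sum_le_sum fun j _ => h2 j
        _ = (1/a^2) * S * L := by rw [hLdef, Finset.mul_sum]
    rw [abs_div, abs_of_pos hS0, div_le_iff₀ hS0]
    calc |Sd z θ| ≤ (1/a^2) * S * L := habs
      _ = (1/a^2) * L * S := by ring
  -- final assembly of constants
  have bnd1 : (k:ℝ)*γ ≤ (k:ℝ)*γ*T := le_mul_of_one_le_right (by positivity) hT1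
  have bnd2 : (k:ℝ) ≤ (k:ℝ)*T := le_mul_of_one_le_right (by positivity) hT1
  have bnd3 : (1/a)*L ≤ (4/a)*T := by
    calc (1/a)*L ≤ (1/a)*(4*T) := by
          apply mul_le_mul_of_nonneg_left hL4 (by positivity)
      _ = (4/a)*T := by ring
  have bnd4 : ((k:ℝ)+1)*((1/a^2)*L) ≤ (4*((k:ℝ)+2)/a^2)*T := by
    calc ((k:ℝ)+1)*((1/a^2)*L) ≤ ((k:ℝ)+1)*((1/a^2)*(4*T)) := by
          apply mul_le_mul_of_nonneg_left
            (mul_le_mul_of_nonneg_left hL4 (by positivity)) (by positivity)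
      _ ≤ ((k:ℝ)+2)*((1/a^2)*(4*T)) := by
          apply mul_le_mul_of_nonneg_right _ (by positivity)
          linarith
      _ = (4*((k:ℝ)+2)/a^2)*T := by ring
  have hAT : A * T = (k:ℝ)*γ*T + (k:ℝ)*T + (4/a)*T + (4*((k:ℝ)+2)/a^2)*T := by
    rw [hAdef]; ring
  constructor
  · -- bound for log V
    rw [deriv_log_Vlog hk hθ01 z hz]
    have hθ1 : θ ≤ 1 := hθ01.2.le
    calc |Real.log (Sf z θ) + θ * (Sd z θ / Sf z θ)|
        ≤ |Real.log (Sf z θ)| + |θ * (Sd z θ / Sf z θ)| := abs_add_le _ _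
      _ = Real.log S + θ * |Sd z θ / S| := by
          rw [abs_mul, abs_of_pos hθ01.1, abs_of_nonneg hlogS0, hSdef]
      _ ≤ ((k:ℝ) + (1/a)*L) + 1 * ((1/a^2)*L) := by
          have := mul_le_mul (hθ1) hSd (abs_nonneg _) (by norm_num)
          linarith
      _ ≤ A * T := by
          have h5 : (1:ℝ) * ((1/a^2)*L) ≤ ((k:ℝ)+1)*((1/a^2)*L) := by
            apply mul_le_mul_of_nonneg_right _ (by positivity)
            linarith
          have h6 : (0:ℝ) ≤ (k:ℝ)*γ*T := by positivity
          rw [hAT]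
          linarith
  · -- bound for the mixed partials
    intro τ hτ
    rw [deriv_log_neg_mixed hk hθ01 τ hτ z hz]
    have hm1 : 1 ≤ τ.card := Finset.card_pos.mpr hτ
    have hmk : (τ.card : ℝ) ≤ (k:ℝ) := by
      have := Finset.card_le_univ τ
      rw [Fintype.card_fin] at this
      exact_mod_cast this
    have hm1' : (1:ℝ) ≤ (τ.card : ℝ) := by exact_mod_cast hm1
    -- |Dc/cc| ≤ k*γ
    have hccne : cc θ τ.card ≠ 0 := (cc_neg hθ01 τ.card hm1).ne
    have t1 : |Dc θ τ.card / cc θ τ.card| ≤ (k:ℝ)*γ := by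
      rw [abs_div]
      rw [div_le_iff₀ (abs_pos.mpr hccne)]
      calc |Dc θ τ.card| ≤ (τ.card : ℝ) * γ * |cc θ τ.card| :=
            Dc_abs_le ha hb1 hθ τ.card
        _ ≤ (k:ℝ) * γ * |cc θ τ.card| := by
            apply mul_le_mul_of_nonneg_right _ (abs_nonneg _)
            exact mul_le_mul_of_nonneg_right hmk hγ0.le
    -- |θ - m| ≤ k
    have t2 : |θ - (τ.card : ℝ)| ≤ (k:ℝ) := by
      rw [abs_of_nonpos (by linarith [hθ01.2])]
      have := hθ01.1
      linarith
    -- |∑_{i∈τ} log z_i| ≤ L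
    have t3 : |∑ i ∈ τ, Real.log (z i)| ≤ L := by
      calc |∑ i ∈ τ, Real.log (z i)| ≤ ∑ i ∈ τ, |Real.log (z i)| :=
            Finset.abs_sum_le_sum_abs _ _
        _ = ∑ i ∈ τ, -Real.log (z i) := by
            apply Finset.sum_congr rfl
            intro i _
            exact abs_of_nonpos (hlogz i)
        _ ≤ L := by
            rw [hLdef]
            apply Finset.sum_le_sum_of_subset_of_nonneg (Finset.subset_univ τ)
            intro j _ _
            linarith [hlogz j]
    have hθa2 : (θ^2)⁻¹ ≤ (a^2)⁻¹ := by
      apply inv_anti₀ (by positivity)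
      nlinarith [hθ.1, ha]
    calc |Dc θ τ.card / cc θ τ.card + (Real.log (Sf z θ)
            + (θ - (τ.card : ℝ)) * (Sd z θ / Sf z θ))
          + (θ^2)⁻¹ * ∑ i ∈ τ, Real.log (z i)|
        ≤ |Dc θ τ.card / cc θ τ.card + (Real.log (Sf z θ)
            + (θ - (τ.card : ℝ)) * (Sd z θ / Sf z θ))|
          + |(θ^2)⁻¹ * ∑ i ∈ τ, Real.log (z i)| := abs_add_le _ _
      _ ≤ |Dc θ τ.card / cc θ τ.card| + |Real.log (Sf z θ)
            + (θ - (τ.card : ℝ)) * (Sd z θ / Sf z θ)|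
          + |(θ^2)⁻¹ * ∑ i ∈ τ, Real.log (z i)| := by
          have := abs_add_le (Dc θ τ.card / cc θ τ.card)
            (Real.log (Sf z θ) + (θ - (τ.card : ℝ)) * (Sd z θ / Sf z θ))
          linarith
      _ ≤ |Dc θ τ.card / cc θ τ.card| + (|Real.log (Sf z θ)|
            + |θ - (τ.card : ℝ)| * |Sd z θ / Sf z θ|)
          + (θ^2)⁻¹ * |∑ i ∈ τ, Real.log (z i)| := by
          have h1 := abs_add_le (Real.log (Sf z θ))
            ((θ - (τ.card : ℝ)) * (Sd z θ / Sf z θ))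
          rw [abs_mul] at h1 ⊢
          rw [abs_of_nonneg (by positivity : (0:ℝ) ≤ (θ^2)⁻¹)]
          linarith
      _ ≤ (k:ℝ)*γ + (((k:ℝ) + (1/a)*L) + (k:ℝ) * ((1/a^2)*L))
          + (a^2)⁻¹ * L := by
          have e1 : |Real.log (Sf z θ)| = Real.log S := by
            rw [hSdef, abs_of_nonneg hlogS0]
          have e2 : |θ - (τ.card : ℝ)| * |Sd z θ / Sf z θ| ≤ (k:ℝ) * ((1/a^2)*L) := by
            rw [← hSdef]
            exact mul_le_mul t2 hSd (abs_nonneg _) (by positivity)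
          have e3 : (θ^2)⁻¹ * |∑ i ∈ τ, Real.log (z i)| ≤ (a^2)⁻¹ * L :=
            mul_le_mul hθa2 t3 (abs_nonneg _) (by positivity)
          rw [e1]
          linarith [hlogS, e2, e3]
      _ ≤ A * T := by
          have h7 : ((k:ℝ) + 1) * ((1/a^2)*L) = (k:ℝ) * ((1/a^2)*L) + (a^2)⁻¹ * L := by
            field_simp
          rw [hAT]
          linarith [bnd1, bnd2, bnd3, bnd4]

end
end

section
/- For α = (α_1,…,α_k) ∈ (0,∞)^k let h_α(w) = (1/k) · Γ(1 + ∑_{i=1}^k α_i) / ( ∑_{i=1}^k α_i w_i )^{k+1} · ∏_{i=1}^k [ α_i/Γ(α_i) ] · ( α_i w_i / ∑_{j=1}^k α_j w_j )^{α_i − 1} for w ∈ int(S^{k−1}). Then for every δ > 0 and every m ∈ {1,…,k}, the partial derivative ∂_{α_m} h_α(w) exists and there is a continuous function C₁ : (0,∞)^k → (0,∞) such that for all α ∈ (0,∞)^k and all w ∈ int(S^{k−1}): |∂_{α_m} h_α(w)| ≤ C₁(α) ∏_{i=1}^k w_i^{α_i − 1 − δ}. -/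
open MeasureTheory Real Set Filter

noncomputable section

/-- The positive orthant `(0,∞)^k`. -/
def posOrth (k : ℕ) : Set (Fin k → ℝ) := {z | ∀ i, 0 < z i}

/-- The Dirichlet angular density
`h_α(w) = (1/k) Γ(1+∑αᵢ)/(∑αᵢwᵢ)^{k+1} ∏ᵢ (αᵢ/Γ(αᵢ)) (αᵢwᵢ/∑αⱼwⱼ)^{αᵢ−1}`. -/
noncomputable def hDirichlet {k : ℕ} (a : Fin k → ℝ) (w : Fin k → ℝ) : ℝ :=
  (1 / (k : ℝ)) * Real.Gamma (1 + ∑ i, a i) / (∑ i, a i * w i) ^ (k + 1)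
    * ∏ i, (a i / Real.Gamma (a i)) * (a i * w i / ∑ j, a j * w j) ^ (a i - 1)

lemma gammaC_analytic : AnalyticOnNhd ℂ Complex.Gamma {s : ℂ | 0 < s.re} := by
  refine DifferentiableOn.analyticOnNhd ?_ (isOpen_lt continuous_const Complex.continuous_re)
  intro s hs
  refine (Complex.differentiableAt_Gamma s fun n => ?_).differentiableWithinAt
  intro h
  have : (0:ℝ) < (-(n:ℂ)).re := by rw [← h]; exact hs
  simp at this
  exact absurd this (not_lt.mpr (Nat.cast_nonneg _))

lemma hasDerivAt_realGamma {x : ℝ} (hx : 0 < x) :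
    HasDerivAt Real.Gamma ((deriv Complex.Gamma ↑x).re) x := by
  have hne : ∀ m : ℕ, (x:ℂ) ≠ -m := by
    intro m h
    have : (0:ℝ) < (-(m:ℂ)).re := by rw [← h]; simpa using hx
    simp at this
    exact absurd this (not_lt.mpr (Nat.cast_nonneg _))
  have h1 : HasDerivAt Complex.Gamma (deriv Complex.Gamma ↑x) ↑x :=
    (Complex.differentiableAt_Gamma _ hne).hasDerivAt
  have h2 := h1.real_of_complex
  have : (fun y : ℝ => (Complex.Gamma ↑y).re) = Real.Gamma := by
    funext y; rw [Complex.Gamma_ofReal, Complex.ofReal_re]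
  rwa [this] at h2

lemma contOn_deriv_realGamma : ContinuousOn (deriv Real.Gamma) (Ioi (0:ℝ)) := by
  have heq : ∀ x ∈ Ioi (0:ℝ), deriv Real.Gamma x = (deriv Complex.Gamma ↑x).re :=
    fun x hx => (hasDerivAt_realGamma hx).deriv
  refine ContinuousOn.congr ?_ heq
  have h1 : ContinuousOn (deriv Complex.Gamma) {s : ℂ | 0 < s.re} :=
    fun s hs => ((gammaC_analytic.deriv) s hs).continuousAt.continuousWithinAt
  have h2 : ContinuousOn (fun x : ℝ => (x:ℂ)) (Ioi 0) :=
    Complex.continuous_ofReal.continuousOn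
  have h3 : MapsTo (fun x : ℝ => (x:ℂ)) (Ioi 0) {s : ℂ | 0 < s.re} := by
    intro x hx; simpa using hx
  exact Complex.continuous_re.comp_continuousOn (h1.comp h2 h3)

def st14S {k : ℕ} (a w : Fin k → ℝ) : ℝ := ∑ i, a i * w i

def st14St {k : ℕ} (m : Fin k) (a w : Fin k → ℝ) (t : ℝ) : ℝ :=
  t * w m + ∑ i ∈ Finset.univ.erase m, a i * w i

def st14F {k : ℕ} (m : Fin k) (a w : Fin k → ℝ) (t : ℝ) : ℝ :=
  Real.log (1/(k:ℝ)) + Real.log (Real.Gamma (1 + (t + ∑ i ∈ Finset.univ.erase m, a i)))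
  - ((k:ℝ)+1) * Real.log (st14St m a w t)
  + (∑ i ∈ Finset.univ.erase m, (Real.log (a i) - Real.log (Real.Gamma (a i))
      + (a i - 1) * (Real.log (a i) + Real.log (w i) - Real.log (st14St m a w t))))
  + (Real.log t - Real.log (Real.Gamma t))
  + (t - 1) * (Real.log t + Real.log (w m) - Real.log (st14St m a w t))

def st14Fder {k : ℕ} (m : Fin k) (a w : Fin k → ℝ) : ℝ :=
  deriv Real.Gamma (1 + ∑ i, a i) / Real.Gamma (1 + ∑ i, a i)
  - ((k:ℝ)+1) * (w m / st14S a w)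
  + (∑ i ∈ Finset.univ.erase m, (a i - 1) * -(w m / st14S a w))
  + ((a m)⁻¹ - deriv Real.Gamma (a m) / Real.Gamma (a m))
  + ((Real.log (a m) + Real.log (w m) - Real.log (st14S a w))
      + (a m - 1) * ((a m)⁻¹ - w m / st14S a w))

lemma st14_ne_neg {x : ℝ} (hx : 0 < x) : ∀ n : ℕ, x ≠ -n := by
  intro n h
  rw [h] at hx
  exact absurd (neg_pos.mp hx) (not_lt.mpr (Nat.cast_nonneg n))

lemma st14St_at {k : ℕ} (m : Fin k) (a w : Fin k → ℝ) : st14St m a w (a m) = st14S a w := by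
  rw [st14St, st14S, Finset.add_sum_erase _ (fun i => a i * w i) (Finset.mem_univ m)]

lemma st14sum_at {k : ℕ} (m : Fin k) (a : Fin k → ℝ) :
    a m + ∑ i ∈ Finset.univ.erase m, a i = ∑ i, a i :=
  Finset.add_sum_erase _ a (Finset.mem_univ m)

lemma st14_hasDerivF {k : ℕ} (m : Fin k) (a w : Fin k → ℝ) (ha : ∀ i, 0 < a i)
    (hw : ∀ i, 0 < w i) :
    HasDerivAt (st14F m a w) (st14Fder m a w) (a m) := by
  have hS0 : 0 < st14S a w :=
    Finset.sum_pos (fun i _ => mul_pos (ha i) (hw i)) ⟨m, Finset.mem_univ m⟩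
  have hSt : HasDerivAt (st14St m a w) (w m) (a m) := by
    have := ((hasDerivAt_id (a m)).mul_const (w m)).add_const
      (∑ i ∈ Finset.univ.erase m, a i * w i)
    simp only [one_mul] at this
    exact this
  have hStne : st14St m a w (a m) ≠ 0 := by rw [st14St_at]; exact hS0.ne'
  have hlogSt : HasDerivAt (fun t => Real.log (st14St m a w t)) (w m / st14S a w) (a m) := by
    have := hSt.log hStne
    rwa [st14St_at] at this
  set E' := ∑ i ∈ Finset.univ.erase m, a i with hE'
  have hc : 0 < 1 + (a m + E') := by
    rw [st14sum_at]
    exact add_pos one_pos (Finset.sum_pos (fun i _ => ha i) ⟨m, Finset.mem_univ m⟩)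
  have hT1 : HasDerivAt (fun t => Real.log (Real.Gamma (1 + (t + E'))))
      (deriv Real.Gamma (1 + ∑ i, a i) / Real.Gamma (1 + ∑ i, a i)) (a m) := by
    have hinner : HasDerivAt (fun t : ℝ => 1 + (t + E')) 1 (a m) :=
      ((hasDerivAt_id (a m)).add_const E').const_add 1
    have hΓ : HasDerivAt Real.Gamma (deriv Real.Gamma (1 + (a m + E'))) (1 + (a m + E')) :=
      (Real.differentiableAt_Gamma (st14_ne_neg hc)).hasDerivAt
    have hcomp := hΓ.comp (a m) hinner
    have := hcomp.log (Real.Gamma_pos_of_pos hc).ne'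
    simp only [Function.comp] at this
    rw [st14sum_at] at this
    simpa using this
  have hT3 : HasDerivAt (fun t => ∑ i ∈ Finset.univ.erase m,
      (Real.log (a i) - Real.log (Real.Gamma (a i))
        + (a i - 1) * (Real.log (a i) + Real.log (w i) - Real.log (st14St m a w t))))
      (∑ i ∈ Finset.univ.erase m, (a i - 1) * -(w m / st14S a w)) (a m) := by
    refine HasDerivAt.fun_sum fun i _ => ?_
    exact ((hlogSt.const_sub (Real.log (a i) + Real.log (w i))).const_mul (a i - 1)).const_add
      (Real.log (a i) - Real.log (Real.Gamma (a i)))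
  have hT4 : HasDerivAt (fun t => Real.log t - Real.log (Real.Gamma t))
      ((a m)⁻¹ - deriv Real.Gamma (a m) / Real.Gamma (a m)) (a m) := by
    refine (Real.hasDerivAt_log (ha m).ne').sub ?_
    exact ((Real.differentiableAt_Gamma (st14_ne_neg (ha m))).hasDerivAt).log
      (Real.Gamma_pos_of_pos (ha m)).ne'
  have hT5 : HasDerivAt (fun t => (t - 1) * (Real.log t + Real.log (w m)
      - Real.log (st14St m a w t)))
      (1 * (Real.log (a m) + Real.log (w m) - Real.log (st14S a w))
        + (a m - 1) * ((a m)⁻¹ - w m / st14S a w)) (a m) := by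
    have h1 : HasDerivAt (fun t : ℝ => t - 1) 1 (a m) := (hasDerivAt_id (a m)).sub_const 1
    have h2 : HasDerivAt (fun t => Real.log t + Real.log (w m) - Real.log (st14St m a w t))
        ((a m)⁻¹ - w m / st14S a w) (a m) :=
      ((Real.hasDerivAt_log (ha m).ne').add_const (Real.log (w m))).sub hlogSt
    have := h1.mul h2
    rwa [st14St_at] at this
  have hF := ((((hT1.const_add (Real.log (1/(k:ℝ)))).sub (hlogSt.const_mul ((k:ℝ)+1))).add
    hT3).add hT4).add hT5
  have : st14F m a w = fun t => Real.log (1/(k:ℝ))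
      + Real.log (Real.Gamma (1 + (t + E'))) - ((k:ℝ)+1) * Real.log (st14St m a w t)
      + (∑ i ∈ Finset.univ.erase m, (Real.log (a i) - Real.log (Real.Gamma (a i))
        + (a i - 1) * (Real.log (a i) + Real.log (w i) - Real.log (st14St m a w t))))
      + (Real.log t - Real.log (Real.Gamma t))
      + (t - 1) * (Real.log t + Real.log (w m) - Real.log (st14St m a w t)) := rfl
  rw [this]
  convert hF using 1
  · rfl
  · rfl
  · rfl
  rw [st14Fder]
  ring

def st14G {k : ℕ} (a w : Fin k → ℝ) : ℝ :=
  Real.log (1/(k:ℝ)) + Real.log (Real.Gamma (1 + ∑ i, a i))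
  - ((k:ℝ)+1) * Real.log (st14S a w)
  + ∑ i, (Real.log (a i) - Real.log (Real.Gamma (a i))
      + (a i - 1) * (Real.log (a i) - Real.log (st14S a w)))

def st14L {k : ℕ} (a : Fin k → ℝ) : ℝ := (∑ i, |Real.log (a i)|) + |Real.log (∑ i, a i)|

def st14R {k : ℕ} (a : Fin k → ℝ) : ℝ := ∑ i, (a i)⁻¹

def st14D {k : ℕ} (m : Fin k) (a : Fin k → ℝ) : ℝ :=
  |deriv Real.Gamma (1 + ∑ i, a i)| / Real.Gamma (1 + ∑ i, a i)
  + ((k:ℝ)+1) * st14R a + (∑ i, |a i - 1|) * st14R a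
  + ((a m)⁻¹ + |deriv Real.Gamma (a m)| / Real.Gamma (a m))
  + (|Real.log (a m)| + st14L a)
  + |a m - 1| * ((a m)⁻¹ + st14R a)

def st14Gb {k : ℕ} (a : Fin k → ℝ) : ℝ :=
  |Real.log (1/(k:ℝ))| + |Real.log (Real.Gamma (1 + ∑ i, a i))| + ((k:ℝ)+1) * st14L a
  + ∑ i, (|Real.log (a i)| + |Real.log (Real.Gamma (a i))|
      + |a i - 1| * (|Real.log (a i)| + st14L a))

lemma st14_Fval {k : ℕ} (m : Fin k) (a w : Fin k → ℝ) :
    st14F m a w (a m) = st14G a w + ∑ i, (a i - 1) * Real.log (w i) := by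
  rw [st14F, st14G, st14St_at]
  rw [show (1 + (a m + ∑ i ∈ Finset.univ.erase m, a i)) = 1 + ∑ i, a i by rw [st14sum_at]]
  rw [← Finset.add_sum_erase _ (fun i => Real.log (a i) - Real.log (Real.Gamma (a i))
      + (a i - 1) * (Real.log (a i) - Real.log (st14S a w))) (Finset.mem_univ m),
    ← Finset.add_sum_erase _ (fun i => (a i - 1) * Real.log (w i)) (Finset.mem_univ m)]
  have hsplit : ∑ i ∈ Finset.univ.erase m, (Real.log (a i) - Real.log (Real.Gamma (a i))
      + (a i - 1) * (Real.log (a i) + Real.log (w i) - Real.log (st14S a w)))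
      = (∑ i ∈ Finset.univ.erase m, (Real.log (a i) - Real.log (Real.Gamma (a i))
        + (a i - 1) * (Real.log (a i) - Real.log (st14S a w))))
        + ∑ i ∈ Finset.univ.erase m, (a i - 1) * Real.log (w i) := by
    rw [← Finset.sum_add_distrib]
    exact Finset.sum_congr rfl fun i _ => by ring
  rw [hsplit]
  ring

lemma st14_Sfacts {k : ℕ} (m : Fin k) (a w : Fin k → ℝ) (ha : ∀ i, 0 < a i)
    (hw : ∀ i, 0 < w i) (hsum : ∑ i, w i = 1) :
    0 < st14S a w ∧ (st14S a w)⁻¹ ≤ st14R a ∧ |Real.log (st14S a w)| ≤ st14L a := by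
  have hS0 : 0 < st14S a w :=
    Finset.sum_pos (fun i _ => mul_pos (ha i) (hw i)) ⟨m, Finset.mem_univ m⟩
  obtain ⟨i₀, -, hi₀⟩ : ∃ i₀ ∈ Finset.univ, ∀ j ∈ Finset.univ, a i₀ ≤ a j :=
    Finset.exists_min_image Finset.univ a ⟨m, Finset.mem_univ m⟩
  have h1 : a i₀ ≤ st14S a w := by
    calc a i₀ = a i₀ * ∑ i, w i := by rw [hsum, mul_one]
    _ = ∑ i, a i₀ * w i := by rw [Finset.mul_sum]
    _ ≤ ∑ i, a i * w i :=
      Finset.sum_le_sum fun i _ => mul_le_mul_of_nonneg_right (hi₀ i (Finset.mem_univ i)) (hw i).le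
  have hsa : 0 < ∑ i, a i := Finset.sum_pos (fun i _ => ha i) ⟨m, Finset.mem_univ m⟩
  have h2 : st14S a w ≤ ∑ i, a i :=
    Finset.sum_le_sum fun i _ => mul_le_of_le_one_right (ha i).le
      (by rw [← hsum]; exact Finset.single_le_sum (fun j _ => (hw j).le) (Finset.mem_univ i))
  refine ⟨hS0, ?_, ?_⟩
  · calc (st14S a w)⁻¹ ≤ (a i₀)⁻¹ := inv_anti₀ (ha i₀) h1
    _ ≤ ∑ i, (a i)⁻¹ :=
      Finset.single_le_sum (fun j _ => (inv_pos.mpr (ha j)).le) (Finset.mem_univ i₀)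
  · have habs : |Real.log (a i₀)| ≤ ∑ i, |Real.log (a i)| :=
      Finset.single_le_sum (f := fun j => |Real.log (a j)|) (fun j _ => abs_nonneg _)
        (Finset.mem_univ i₀)
    have nonneg1 : 0 ≤ ∑ i, |Real.log (a i)| := Finset.sum_nonneg fun j _ => abs_nonneg _
    rw [abs_le]
    constructor
    · rw [st14L]
      have := Real.log_le_log (ha i₀) h1
      have := neg_abs_le (Real.log (a i₀))
      linarith [abs_nonneg (Real.log (∑ i, a i))]
    · rw [st14L]
      have := Real.log_le_log hS0 h2
      have := le_abs_self (Real.log (∑ i, a i))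
      linarith

lemma st14_Fder_bound {k : ℕ} (m : Fin k) (a w : Fin k → ℝ) (ha : ∀ i, 0 < a i)
    (hw : ∀ i, 0 < w i) (hsum : ∑ i, w i = 1) :
    |st14Fder m a w| ≤ st14D m a + |Real.log (w m)| := by
  obtain ⟨hS0, hinvS, hlogS⟩ := st14_Sfacts m a w ha hw hsum
  have hw1 : ∀ i, w i ≤ 1 := fun i => by
    rw [← hsum]; exact Finset.single_le_sum (fun j _ => (hw j).le) (Finset.mem_univ i)
  have hq0 : 0 ≤ w m / st14S a w := div_nonneg (hw m).le hS0.le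
  have hqR : w m / st14S a w ≤ st14R a := by
    rw [div_eq_mul_inv]
    calc w m * (st14S a w)⁻¹ ≤ 1 * (st14S a w)⁻¹ :=
      mul_le_mul_of_nonneg_right (hw1 m) (inv_nonneg.mpr hS0.le)
    _ = (st14S a w)⁻¹ := one_mul _
    _ ≤ st14R a := hinvS
  have hRnn : 0 ≤ st14R a := Finset.sum_nonneg fun j _ => (inv_pos.mpr (ha j)).le
  set q := w m / st14S a w with hq
  have hA : |deriv Real.Gamma (1 + ∑ i, a i) / Real.Gamma (1 + ∑ i, a i)|
      = |deriv Real.Gamma (1 + ∑ i, a i)| / Real.Gamma (1 + ∑ i, a i) := by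
    rw [abs_div, abs_of_pos (Real.Gamma_pos_of_pos
      (add_pos one_pos (Finset.sum_pos (fun i _ => ha i) ⟨m, Finset.mem_univ m⟩)))]
  have hB : |((k:ℝ)+1) * q| ≤ ((k:ℝ)+1) * st14R a := by
    rw [abs_mul, abs_of_nonneg hq0, abs_of_nonneg (by positivity : (0:ℝ) ≤ (k:ℝ)+1)]
    exact mul_le_mul_of_nonneg_left hqR (by positivity)
  have hC : |∑ i ∈ Finset.univ.erase m, (a i - 1) * -q| ≤ (∑ i, |a i - 1|) * st14R a := by
    calc |∑ i ∈ Finset.univ.erase m, (a i - 1) * -q|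
        ≤ ∑ i ∈ Finset.univ.erase m, |(a i - 1) * -q| := Finset.abs_sum_le_sum_abs _ _
    _ = ∑ i ∈ Finset.univ.erase m, |a i - 1| * q := by
        refine Finset.sum_congr rfl fun i _ => ?_
        rw [abs_mul, abs_neg, abs_of_nonneg hq0]
    _ ≤ ∑ i, |a i - 1| * q :=
        Finset.sum_le_sum_of_subset_of_nonneg (Finset.erase_subset _ _)
          (fun i _ _ => mul_nonneg (abs_nonneg _) hq0)
    _ = (∑ i, |a i - 1|) * q := (Finset.sum_mul _ _ _).symm
    _ ≤ (∑ i, |a i - 1|) * st14R a :=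
        mul_le_mul_of_nonneg_left hqR (Finset.sum_nonneg fun i _ => abs_nonneg _)
  have hD : |(a m)⁻¹ - deriv Real.Gamma (a m) / Real.Gamma (a m)|
      ≤ (a m)⁻¹ + |deriv Real.Gamma (a m)| / Real.Gamma (a m) := by
    refine (abs_sub _ _).trans ?_
    rw [abs_of_nonneg (inv_pos.mpr (ha m)).le, abs_div,
      abs_of_pos (Real.Gamma_pos_of_pos (ha m))]
  have hE1 : |Real.log (a m) + Real.log (w m) - Real.log (st14S a w)|
      ≤ (|Real.log (a m)| + st14L a) + |Real.log (w m)| := by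
    have t1 := le_abs_self (Real.log (a m))
    have t2 := neg_abs_le (Real.log (a m))
    have t3 := le_abs_self (Real.log (w m))
    have t4 := neg_abs_le (Real.log (w m))
    have t5 := le_abs_self (Real.log (st14S a w))
    have t6 := neg_abs_le (Real.log (st14S a w))
    rw [abs_le]; constructor <;> [linarith; linarith]
  have hE2 : |(a m - 1) * ((a m)⁻¹ - q)| ≤ |a m - 1| * ((a m)⁻¹ + st14R a) := by
    rw [abs_mul]
    refine mul_le_mul_of_nonneg_left ?_ (abs_nonneg _)
    refine (abs_sub _ _).trans ?_
    rw [abs_of_nonneg (inv_pos.mpr (ha m)).le, abs_of_nonneg hq0]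
    exact add_le_add le_rfl hqR
  rw [st14Fder, st14D]
  have tri : ∀ x1 x2 x3 x4 x5 x6 : ℝ, |x1 - x2 + x3 + x4 + (x5 + x6)|
      ≤ |x1| + |x2| + |x3| + |x4| + (|x5| + |x6|) := by
    intro x1 x2 x3 x4 x5 x6
    have h1 := abs_add_le (x1 - x2 + x3 + x4) (x5 + x6)
    have h2 := abs_add_le (x1 - x2 + x3) x4
    have h3 := abs_add_le (x1 - x2) x3
    have h4 := abs_sub x1 x2
    have h5 := abs_add_le x5 x6
    linarith
  refine (tri _ _ _ _ _ _).trans ?_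
  rw [hA]
  linarith [hB, hC, hD, hE1, hE2]

lemma st14_G_bound {k : ℕ} (m : Fin k) (a w : Fin k → ℝ) (ha : ∀ i, 0 < a i)
    (hw : ∀ i, 0 < w i) (hsum : ∑ i, w i = 1) :
    |st14G a w| ≤ st14Gb a := by
  obtain ⟨hS0, hinvS, hlogS⟩ := st14_Sfacts m a w ha hw hsum
  have hLnn : 0 ≤ st14L a := le_trans (abs_nonneg _) hlogS
  have hterm : ∀ i : Fin k, |Real.log (a i) - Real.log (Real.Gamma (a i))
      + (a i - 1) * (Real.log (a i) - Real.log (st14S a w))|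
      ≤ |Real.log (a i)| + |Real.log (Real.Gamma (a i))|
        + |a i - 1| * (|Real.log (a i)| + st14L a) := by
    intro i
    have h1 := abs_add_le (Real.log (a i) - Real.log (Real.Gamma (a i)))
      ((a i - 1) * (Real.log (a i) - Real.log (st14S a w)))
    have h2 := abs_sub (Real.log (a i)) (Real.log (Real.Gamma (a i)))
    have h3 : |(a i - 1) * (Real.log (a i) - Real.log (st14S a w))|
        ≤ |a i - 1| * (|Real.log (a i)| + st14L a) := by
      rw [abs_mul]
      refine mul_le_mul_of_nonneg_left ((abs_sub _ _).trans ?_) (abs_nonneg _)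
      exact add_le_add le_rfl hlogS
    linarith
  have hsumterm : |∑ i, (Real.log (a i) - Real.log (Real.Gamma (a i))
      + (a i - 1) * (Real.log (a i) - Real.log (st14S a w)))|
      ≤ ∑ i, (|Real.log (a i)| + |Real.log (Real.Gamma (a i))|
        + |a i - 1| * (|Real.log (a i)| + st14L a)) :=
    (Finset.abs_sum_le_sum_abs _ _).trans (Finset.sum_le_sum fun i _ => hterm i)
  rw [st14G, st14Gb]
  have tri : ∀ x1 x2 x3 x4 : ℝ, |x1 + x2 - x3 + x4| ≤ |x1| + |x2| + |x3| + |x4| := by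
    intro x1 x2 x3 x4
    have h1 := abs_add_le (x1 + x2 - x3) x4
    have h2 := abs_sub (x1 + x2) x3
    have h3 := abs_add_le x1 x2
    linarith
  refine (tri _ _ _ _).trans ?_
  have h4 : |((k:ℝ)+1) * Real.log (st14S a w)| ≤ ((k:ℝ)+1) * st14L a := by
    rw [abs_mul, abs_of_nonneg (by positivity : (0:ℝ) ≤ (k:ℝ)+1)]
    exact mul_le_mul_of_nonneg_left hlogS (by positivity)
  linarith [hsumterm, h4]

lemma st14_repr {k : ℕ} (hk : 1 ≤ k) (m : Fin k) (a w : Fin k → ℝ) (ha : ∀ i, 0 < a i)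
    (hw : ∀ i, 0 < w i) {t : ℝ} (ht : 0 < t) :
    hDirichlet (Function.update a m t) w = Real.exp (st14F m a w t) := by
  set b := Function.update a m t with hb
  have hbi : ∀ i, 0 < b i := by
    intro i
    rcases eq_or_ne i m with h | h
    · rw [hb, h, Function.update_self]; exact ht
    · rw [hb, Function.update_of_ne h]; exact ha i
  have hSb : ∑ i, b i * w i = st14St m a w t := by
    rw [st14St, ← Finset.add_sum_erase _ (fun i => b i * w i) (Finset.mem_univ m)]
    congr 1
    · rw [hb, Function.update_self]
    · exact Finset.sum_congr rfl fun i hi => by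
        rw [hb, Function.update_of_ne (Finset.ne_of_mem_erase hi)]
  have hsumb : ∑ i, b i = t + ∑ i ∈ Finset.univ.erase m, a i := by
    rw [← Finset.add_sum_erase _ b (Finset.mem_univ m)]
    congr 1
    · rw [hb, Function.update_self]
    · exact Finset.sum_congr rfl fun i hi => by
        rw [hb, Function.update_of_ne (Finset.ne_of_mem_erase hi)]
  have hS : 0 < st14St m a w t := by
    rw [← hSb]
    exact Finset.sum_pos (fun i _ => mul_pos (hbi i) (hw i)) ⟨m, Finset.mem_univ m⟩
  have hΓb : ∀ i, 0 < Real.Gamma (b i) := fun i => Real.Gamma_pos_of_pos (hbi i)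
  have hsb : 0 < 1 + ∑ i, b i :=
    add_pos one_pos (Finset.sum_pos (fun i _ => hbi i) ⟨m, Finset.mem_univ m⟩)
  have hΓc : 0 < Real.Gamma (1 + ∑ i, b i) := Real.Gamma_pos_of_pos hsb
  have hk' : (0:ℝ) < (k:ℝ) := by exact_mod_cast Nat.lt_of_lt_of_le Nat.zero_lt_one hk
  have hfac : ∀ i, 0 < b i / Real.Gamma (b i) * (b i * w i / ∑ j, b j * w j) ^ (b i - 1) := by
    intro i
    refine mul_pos (div_pos (hbi i) (hΓb i)) (Real.rpow_pos_of_pos ?_ _)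
    exact div_pos (mul_pos (hbi i) (hw i)) (hSb ▸ hS)
  have hpos : 0 < hDirichlet b w := by
    rw [hDirichlet]
    refine mul_pos (div_pos (mul_pos (by positivity) hΓc) (pow_pos (hSb ▸ hS) _))
      (Finset.prod_pos fun i _ => hfac i)
  rw [← Real.exp_log hpos]
  congr 1
  have hflog : ∀ i : Fin k,
      Real.log (b i / Real.Gamma (b i) * (b i * w i / st14St m a w t) ^ (b i - 1))
        = Real.log (b i) - Real.log (Real.Gamma (b i))
          + (b i - 1) * (Real.log (b i) + Real.log (w i) - Real.log (st14St m a w t)) := by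
    intro i
    rw [Real.log_mul (div_pos (hbi i) (hΓb i)).ne'
        (Real.rpow_pos_of_pos (div_pos (mul_pos (hbi i) (hw i)) hS) _).ne',
      Real.log_div (hbi i).ne' (hΓb i).ne',
      Real.log_rpow (div_pos (mul_pos (hbi i) (hw i)) hS),
      Real.log_div (mul_pos (hbi i) (hw i)).ne' hS.ne',
      Real.log_mul (hbi i).ne' (hw i).ne']
  rw [hDirichlet]
  rw [Real.log_mul (div_pos (mul_pos (one_div_pos.mpr hk') hΓc) (pow_pos (hSb ▸ hS) _)).ne'
      (Finset.prod_pos fun i _ => hfac i).ne',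
    Real.log_div (mul_pos (one_div_pos.mpr hk') hΓc).ne' (pow_pos (hSb ▸ hS) _).ne',
    Real.log_mul (one_div_pos.mpr hk').ne' hΓc.ne',
    Real.log_prod (fun i _ => (hfac i).ne'), hSb, Real.log_pow]
  rw [Finset.sum_congr rfl (fun i _ => hflog i), hsumb]
  rw [← Finset.add_sum_erase _ _ (Finset.mem_univ m)]
  have hbm : b m = t := by rw [hb, Function.update_self]
  have herase : ∑ i ∈ Finset.univ.erase m,
      (Real.log (b i) - Real.log (Real.Gamma (b i))
        + (b i - 1) * (Real.log (b i) + Real.log (w i) - Real.log (st14St m a w t)))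
      = ∑ i ∈ Finset.univ.erase m,
      (Real.log (a i) - Real.log (Real.Gamma (a i))
        + (a i - 1) * (Real.log (a i) + Real.log (w i) - Real.log (st14St m a w t))) := by
    refine Finset.sum_congr rfl fun i hi => by
      rw [hb, Function.update_of_ne (Finset.ne_of_mem_erase hi)]
  rw [herase, hbm, st14F]
  push_cast
  ring

lemma st14_cont {k : ℕ} (hk : 1 ≤ k) (m : Fin k) (c : ℝ) :
    ContinuousOn (fun a => Real.exp (st14Gb a) * (st14D m a + c)) (posOrth k) := by
  have hne : Nonempty (Fin k) := ⟨m⟩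
  have hsum_pos : ∀ a ∈ posOrth k, 0 < ∑ i, a i := fun a ha =>
    Finset.sum_pos (fun i _ => ha i) ⟨m, Finset.mem_univ m⟩
  have hc1 : Continuous fun a : Fin k → ℝ => (1:ℝ) + ∑ i, a i := by
    exact continuous_const.add (continuous_finset_sum _ fun i _ => continuous_apply i)
  have hc1pos : ∀ a ∈ posOrth k, 0 < 1 + ∑ i, a i := fun a ha =>
    add_pos one_pos (hsum_pos a ha)
  have hΓ1 : ContinuousOn (fun a : Fin k → ℝ => Real.Gamma (1 + ∑ i, a i)) (posOrth k) :=
    fun x hx => (ContinuousAt.comp (g := Real.Gamma)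
      (f := fun a : Fin k → ℝ => 1 + ∑ i, a i) (x := x)
      (Real.differentiableAt_Gamma (st14_ne_neg (hc1pos x hx))).continuousAt
      hc1.continuousAt).continuousWithinAt
  have hdΓ1 : ContinuousOn (fun a : Fin k → ℝ => deriv Real.Gamma (1 + ∑ i, a i))
      (posOrth k) :=
    contOn_deriv_realGamma.comp hc1.continuousOn (fun x hx => hc1pos x hx)
  have happ : Continuous fun a : Fin k → ℝ => a m := continuous_apply m
  have hΓm : ContinuousOn (fun a : Fin k → ℝ => Real.Gamma (a m)) (posOrth k) :=
    fun x hx => (ContinuousAt.comp (g := Real.Gamma)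
      (f := fun a : Fin k → ℝ => a m) (x := x)
      (Real.differentiableAt_Gamma (st14_ne_neg (hx m))).continuousAt
      happ.continuousAt).continuousWithinAt
  have hdΓm : ContinuousOn (fun a : Fin k → ℝ => deriv Real.Gamma (a m)) (posOrth k) :=
    contOn_deriv_realGamma.comp happ.continuousOn (fun x hx => hx m)
  have hL : ContinuousOn (st14L (k := k)) (posOrth k) := by
    refine ContinuousOn.add ?_ ?_
    · exact continuousOn_finset_sum _ fun i _ =>
        (((continuous_apply i).continuousOn).log (fun x hx => (hx i).ne')).abs
    · exact (((continuous_finset_sum Finset.univ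
        (fun i _ => continuous_apply i)).continuousOn).log
        (fun x hx => (hsum_pos x hx).ne')).abs
  have hR : ContinuousOn (st14R (k := k)) (posOrth k) :=
    continuousOn_finset_sum _ fun i _ =>
      ((continuous_apply i).continuousOn).inv₀ (fun x hx => (hx i).ne')
  have hGammane1 : ∀ x ∈ posOrth k, Real.Gamma (1 + ∑ i, x i) ≠ 0 :=
    fun x hx => (Real.Gamma_pos_of_pos (hc1pos x hx)).ne'
  have hamne : ∀ x ∈ posOrth k, x m ≠ 0 := fun x hx => (hx m).ne'
  have ht1 : ContinuousOn (fun a : Fin k → ℝ =>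
      |deriv Real.Gamma (1 + ∑ i, a i)| / Real.Gamma (1 + ∑ i, a i)) (posOrth k) :=
    hdΓ1.abs.div hΓ1 hGammane1
  have ht2 : ContinuousOn (fun a : Fin k → ℝ => ((k:ℝ)+1) * st14R a) (posOrth k) :=
    continuousOn_const.mul hR
  have ht3 : ContinuousOn (fun a : Fin k → ℝ => (∑ i, |a i - 1|) * st14R a) (posOrth k) :=
    (continuousOn_finset_sum _ fun i _ =>
      ((continuous_apply i).continuousOn.sub continuousOn_const).abs).mul hR
  have ht4 : ContinuousOn (fun a : Fin k → ℝ =>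
      (a m)⁻¹ + |deriv Real.Gamma (a m)| / Real.Gamma (a m)) (posOrth k) :=
    (happ.continuousOn.inv₀ hamne).add (hdΓm.abs.div hΓm
      (fun x hx => (Real.Gamma_pos_of_pos (hx m)).ne'))
  have ht5 : ContinuousOn (fun a : Fin k → ℝ => |Real.log (a m)| + st14L a) (posOrth k) :=
    ((happ.continuousOn.log hamne).abs).add hL
  have ht6 : ContinuousOn (fun a : Fin k → ℝ =>
      |a m - 1| * ((a m)⁻¹ + st14R a)) (posOrth k) :=
    ((happ.continuousOn.sub continuousOn_const).abs).mul
      ((happ.continuousOn.inv₀ hamne).add hR)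
  have hD : ContinuousOn (st14D m) (posOrth k) :=
    ((((ht1.add ht2).add ht3).add ht4).add ht5).add ht6
  have hGb : ContinuousOn (st14Gb (k := k)) (posOrth k) := by
    refine ((continuousOn_const.add ((hΓ1.log hGammane1).abs)).add
      (continuousOn_const.mul hL)).add (continuousOn_finset_sum _ fun i _ => ?_)
    have happi : Continuous fun a : Fin k → ℝ => a i := continuous_apply i
    have hΓi : ContinuousOn (fun a : Fin k → ℝ => Real.Gamma (a i)) (posOrth k) :=
      fun x hx => (ContinuousAt.comp (g := Real.Gamma)
        (f := fun a : Fin k → ℝ => a i) (x := x)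
        (Real.differentiableAt_Gamma (st14_ne_neg (hx i))).continuousAt
        happi.continuousAt).continuousWithinAt
    refine ((happi.continuousOn.log (fun x hx => (hx i).ne')).abs.add
      ((hΓi.log (fun x hx => (Real.Gamma_pos_of_pos (hx i)).ne')).abs)).add ?_
    exact ((happi.continuousOn.sub continuousOn_const).abs).mul
      (((happi.continuousOn.log (fun x hx => (hx i).ne')).abs).add hL)
  exact (Real.continuous_exp.comp_continuousOn hGb).mul (hD.add continuousOn_const)

lemma st14_D_nonneg {k : ℕ} (m : Fin k) (a : Fin k → ℝ) (ha : ∀ i, 0 < a i) :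
    0 ≤ st14D m a := by
  have hR : 0 ≤ st14R a := Finset.sum_nonneg fun i _ => (inv_pos.mpr (ha i)).le
  have hL : 0 ≤ st14L a :=
    add_nonneg (Finset.sum_nonneg fun i _ => abs_nonneg _) (abs_nonneg _)
  have h1 : 0 < Real.Gamma (a m) := Real.Gamma_pos_of_pos (ha m)
  have hs : 0 < ∑ i, a i := Finset.sum_pos (fun i _ => ha i) ⟨m, Finset.mem_univ m⟩
  rw [st14D]
  refine add_nonneg (add_nonneg (add_nonneg (add_nonneg (add_nonneg ?_ ?_) ?_) ?_) ?_) ?_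
  · exact div_nonneg (abs_nonneg _) (Real.Gamma_pos_of_pos (by linarith)).le
  · exact mul_nonneg (by positivity) hR
  · exact mul_nonneg (Finset.sum_nonneg fun i _ => abs_nonneg _) hR
  · exact add_nonneg (inv_pos.mpr (ha m)).le (div_nonneg (abs_nonneg _) h1.le)
  · exact add_nonneg (abs_nonneg _) hL
  · exact mul_nonneg (abs_nonneg _) (add_nonneg (inv_pos.mpr (ha m)).le hR)

lemma st14_hasDeriv {k : ℕ} (hk : 1 ≤ k) (m : Fin k) (a w : Fin k → ℝ) (ha : ∀ i, 0 < a i)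
    (hw : ∀ i, 0 < w i) :
    HasDerivAt (fun t => hDirichlet (Function.update a m t) w)
      (Real.exp (st14F m a w (a m)) * st14Fder m a w) (a m) := by
  have hF := st14_hasDerivF m a w ha hw
  refine hF.exp.congr_of_eventuallyEq ?_
  filter_upwards [Ioi_mem_nhds (ha m)] with t ht
  exact st14_repr hk m a w ha hw ht

/-- derivative bound for the Dirichlet angular density, Lemma 3 of the
paper.  For every `δ > 0` and `m`, the partial derivative `∂_{α_m} h_α(w)` exists and there
is a continuous function `C₁ : (0,∞)^k → (0,∞)` with
`|∂_{α_m} h_α(w)| ≤ C₁(α) ∏ᵢ wᵢ^{αᵢ−1−δ}` for all `α ∈ (0,∞)^k`, `w ∈ int(S^{k−1})`. -/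
theorem stmt14 {k : ℕ} (hk : 1 ≤ k) (δ : ℝ) (hδ : 0 < δ) (m : Fin k) :
    (∀ a ∈ posOrth k, ∀ w ∈ intSimplex k,
      DifferentiableAt ℝ (fun t => hDirichlet (Function.update a m t) w) (a m)) ∧
    ∃ C₁ : (Fin k → ℝ) → ℝ, ContinuousOn C₁ (posOrth k) ∧ (∀ a ∈ posOrth k, 0 < C₁ a) ∧
      ∀ a ∈ posOrth k, ∀ w ∈ intSimplex k,
        |deriv (fun t => hDirichlet (Function.update a m t) w) (a m)|
          ≤ C₁ a * ∏ i, (w i) ^ (a i - 1 - δ) := by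
  have key : ∀ a ∈ posOrth k, ∀ w ∈ intSimplex k,
      HasDerivAt (fun t => hDirichlet (Function.update a m t) w)
        (Real.exp (st14F m a w (a m)) * st14Fder m a w) (a m) := by
    intro a ha w hw
    exact st14_hasDeriv hk m a w ha hw.1
  constructor
  · exact fun a ha w hw => (key a ha w hw).differentiableAt
  refine ⟨fun a => Real.exp (st14Gb a) * (st14D m a + 1/δ), st14_cont hk m (1/δ), ?_, ?_⟩
  · intro a ha
    have hD0 : 0 ≤ st14D m a := st14_D_nonneg m a ha
    have : (0:ℝ) < 1/δ := one_div_pos.mpr hδ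
    exact mul_pos (Real.exp_pos _) (by linarith)
  · intro a ha w hw
    obtain ⟨hwpos, hwsum⟩ := hw
    have ha' : ∀ i, 0 < a i := ha
    rw [(key a ha w ⟨hwpos, hwsum⟩).deriv]
    have hw1 : ∀ i, w i ≤ 1 := fun i => by
      rw [← hwsum]; exact Finset.single_le_sum (fun j _ => (hwpos j).le) (Finset.mem_univ i)
    have hDnn := st14_D_nonneg m a ha'
    have hprod_nn : 0 ≤ ∏ i, w i ^ (a i - 1) :=
      Finset.prod_nonneg fun i _ => Real.rpow_nonneg (hwpos i).le _
    have h1 : (1:ℝ) ≤ w m ^ (-δ) :=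
      Real.one_le_rpow_of_pos_of_le_one_of_nonpos (hwpos m) (hw1 m) (neg_nonpos.mpr hδ.le)
    have h2 : |Real.log (w m)| ≤ (1/δ) * w m ^ (-δ) := by
      have e1 : |Real.log (w m)| = Real.log ((w m)⁻¹) := by
        rw [Real.log_inv, abs_of_nonpos (Real.log_nonpos (hwpos m).le (hw1 m))]
      rw [e1]
      calc Real.log ((w m)⁻¹) ≤ ((w m)⁻¹) ^ δ / δ :=
            Real.log_le_rpow_div (inv_nonneg.mpr (hwpos m).le) hδ
      _ = (1/δ) * w m ^ (-δ) := by
          rw [Real.inv_rpow (hwpos m).le, ← Real.rpow_neg (hwpos m).le]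
          ring
    have h3 : st14D m a + |Real.log (w m)| ≤ (st14D m a + 1/δ) * w m ^ (-δ) := by
      have h4 : st14D m a ≤ st14D m a * w m ^ (-δ) := le_mul_of_one_le_right hDnn h1
      have h5 : (st14D m a + 1/δ) * w m ^ (-δ)
          = st14D m a * w m ^ (-δ) + (1/δ) * w m ^ (-δ) := by ring
      linarith
    have hFb := st14_Fder_bound m a w ha' hwpos hwsum
    have hGb := st14_G_bound m a w ha' hwpos hwsum
    have hexpF : Real.exp (st14F m a w (a m))
        = Real.exp (st14G a w) * ∏ i, w i ^ (a i - 1) := by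
      rw [st14_Fval, Real.exp_add, Real.exp_sum]
      congr 1
      refine Finset.prod_congr rfl fun i _ => ?_
      rw [Real.rpow_def_of_pos (hwpos i), mul_comm]
    have hprodb : (∏ i, w i ^ (a i - 1)) * w m ^ (-δ) ≤ ∏ i, w i ^ (a i - 1 - δ) := by
      rw [← Finset.mul_prod_erase Finset.univ (fun i => w i ^ (a i - 1)) (Finset.mem_univ m),
        ← Finset.mul_prod_erase Finset.univ (fun i => w i ^ (a i - 1 - δ)) (Finset.mem_univ m)]
      have e1 : w m ^ (a m - 1) * w m ^ (-δ) = w m ^ (a m - 1 - δ) := by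
        rw [← Real.rpow_add (hwpos m)]; ring_nf
      calc w m ^ (a m - 1) * (∏ i ∈ Finset.univ.erase m, w i ^ (a i - 1)) * w m ^ (-δ)
          = w m ^ (a m - 1 - δ) * ∏ i ∈ Finset.univ.erase m, w i ^ (a i - 1) := by
            rw [← e1]; ring
      _ ≤ w m ^ (a m - 1 - δ) * ∏ i ∈ Finset.univ.erase m, w i ^ (a i - 1 - δ) := by
            refine mul_le_mul_of_nonneg_left ?_ (Real.rpow_nonneg (hwpos m).le _)
            refine Finset.prod_le_prod (fun i _ => Real.rpow_nonneg (hwpos i).le _)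
              (fun i _ => ?_)
            exact Real.rpow_le_rpow_of_exponent_ge (hwpos i) (hw1 i) (by linarith)
    calc |Real.exp (st14F m a w (a m)) * st14Fder m a w|
        = Real.exp (st14G a w) * (∏ i, w i ^ (a i - 1)) * |st14Fder m a w| := by
          rw [abs_mul, abs_of_pos (Real.exp_pos _), hexpF]
      _ ≤ Real.exp (st14Gb a) * (∏ i, w i ^ (a i - 1)) * ((st14D m a + 1/δ) * w m ^ (-δ)) := by
          have hle : Real.exp (st14G a w) ≤ Real.exp (st14Gb a) :=
            Real.exp_le_exp.mpr ((le_abs_self _).trans hGb)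
          exact mul_le_mul (mul_le_mul_of_nonneg_right hle hprod_nn) (hFb.trans h3)
            (abs_nonneg _) (mul_nonneg (Real.exp_pos _).le hprod_nn)
      _ = Real.exp (st14Gb a) * (st14D m a + 1/δ) * ((∏ i, w i ^ (a i - 1)) * w m ^ (-δ)) := by
          ring
      _ ≤ Real.exp (st14Gb a) * (st14D m a + 1/δ) * ∏ i, w i ^ (a i - 1 - δ) := by
          refine mul_le_mul_of_nonneg_left hprodb ?_
          have : (0:ℝ) < 1/δ := one_div_pos.mpr hδ
          exact mul_nonneg (Real.exp_pos _).le (by linarith)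

end
end
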